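/- arXiv:2111.08996 — 5 statements merged into one kernel-verified Lean document; each statement's English description precedes it below -/
import Mathlib

section
/- Let n ≥ 1 be an integer and R = C[x,y,z,t]/(xz − y(y+t^n)). Then there is a C-algebra isomorphism between the localization of R at the multiplicative set generated by (the images of) y and t, and the localization of the polynomial ring C[x,w,t] at the multiplicative set generated by t and xw − t^n, given by x ↦ x, t ↦ t, y ↦ xw − t^n, z ↦ w(xw − t^n), whose inverse sends w to z/y. -/
set_option maxHeartbeats 1000000
set_option synthInstance.maxHeartbeats 400000


open MvPolynomial

/-- The coordinate ring `R = C[x,y,z,t]/(xz − y(y+t^n))`, with `x, y, z, t`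
the variables `X 0, X 1, X 2, X 3`. -/
noncomputable abbrev flopBase (n : ℕ) : Type :=
  MvPolynomial (Fin 4) ℂ ⧸
    Ideal.span {(X 0 * X 2 - X 1 ^ 2 - X 1 * X 3 ^ n : MvPolynomial (Fin 4) ℂ)}

/-- The multiplicative set of `R` generated by (the classes of) `y` and `t`. -/
noncomputable def flopSubmonoid (n : ℕ) : Submonoid (flopBase n) :=
  Submonoid.closure {Ideal.Quotient.mk _ (X 1), Ideal.Quotient.mk _ (X 3)}

/-- The multiplicative set of the polynomial ring `C[x,w,t]` (variables
`x, w, t` being `X 0, X 1, X 2`) generated by `t` and `xw − t^n`. -/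
noncomputable def polySubmonoid (n : ℕ) : Submonoid (MvPolynomial (Fin 3) ℂ) :=
  Submonoid.closure {X 2, X 0 * X 1 - X 2 ^ n}

section Aux

variable (n : ℕ)

local notation "P4" => MvPolynomial (Fin 4) ℂ
local notation "P3" => MvPolynomial (Fin 3) ℂ
local notation "A" => Localization (polySubmonoid n)
local notation "B" => Localization (flopSubmonoid n)

lemma hyMem : (Ideal.Quotient.mk _ (X 1) : flopBase n) ∈ flopSubmonoid n :=
  Submonoid.subset_closure (Set.mem_insert _ _)

lemma htMem : (Ideal.Quotient.mk _ (X 3) : flopBase n) ∈ flopSubmonoid n :=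
  Submonoid.subset_closure (Set.mem_insert_of_mem _ rfl)

lemma htMem' : (X 2 : P3) ∈ polySubmonoid n :=
  Submonoid.subset_closure (Set.mem_insert _ _)

lemma hpMem : (X 0 * X 1 - X 2 ^ n : P3) ∈ polySubmonoid n :=
  Submonoid.subset_closure (Set.mem_insert_of_mem _ rfl)

/-- forward map on polynomial ring -/
noncomputable def fwdPoly : P4 →ₐ[ℂ] A :=
  aeval ![algebraMap P3 A (X 0), algebraMap P3 A (X 0 * X 1 - X 2 ^ n),
    algebraMap P3 A (X 1 * (X 0 * X 1 - X 2 ^ n)), algebraMap P3 A (X 2)]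

lemma fwdPoly_X0 : fwdPoly n (X 0) = algebraMap P3 A (X 0) := by simp [fwdPoly]
lemma fwdPoly_X1 : fwdPoly n (X 1) = algebraMap P3 A (X 0 * X 1 - X 2 ^ n) := by simp [fwdPoly]
lemma fwdPoly_X2 : fwdPoly n (X 2) = algebraMap P3 A (X 1 * (X 0 * X 1 - X 2 ^ n)) := by
  simp [fwdPoly]
lemma fwdPoly_X3 : fwdPoly n (X 3) = algebraMap P3 A (X 2) := by simp [fwdPoly]

lemma fwdPoly_rel : fwdPoly n (X 0 * X 2 - X 1 ^ 2 - X 1 * X 3 ^ n) = 0 := by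
  have h : fwdPoly n (X 0 * X 2 - X 1 ^ 2 - X 1 * X 3 ^ n) =
      algebraMap P3 A ((X 0) * (X 1 * (X 0 * X 1 - X 2 ^ n)) -
        (X 0 * X 1 - X 2 ^ n) ^ 2 - (X 0 * X 1 - X 2 ^ n) * (X 2) ^ n) := by
    simp only [map_sub, map_mul, map_pow, fwdPoly_X0, fwdPoly_X1, fwdPoly_X2, fwdPoly_X3]
    try ring
  rw [h, show ((X 0) * (X 1 * (X 0 * X 1 - X 2 ^ n)) -
        (X 0 * X 1 - X 2 ^ n) ^ 2 - (X 0 * X 1 - X 2 ^ n) * (X 2) ^ n : P3) = 0 by ring,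
    map_zero]

/-- forward map on the quotient ring -/
noncomputable def fwdQ : flopBase n →ₐ[ℂ] A :=
  Ideal.Quotient.liftₐ _ (fwdPoly n) (by
    intro a ha
    rw [Ideal.mem_span_singleton] at ha
    obtain ⟨c, rfl⟩ := ha
    rw [map_mul, fwdPoly_rel, zero_mul])

lemma fwdQ_mk (p : P4) : fwdQ n (Ideal.Quotient.mk _ p) = fwdPoly n p := rfl

lemma fwdQ_units : ∀ s : flopSubmonoid n, IsUnit ((fwdQ n) s) := by
  rintro ⟨s, hs⟩
  show IsUnit (fwdQ n s)
  refine Submonoid.closure_induction (fun x hx => ?_) ?_ (fun a b _ _ ha hb => ?_) hs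
  · rcases hx with h | h
    · rw [h, fwdQ_mk, fwdPoly_X1]
      exact IsLocalization.map_units A ⟨_, hpMem n⟩
    · rw [Set.mem_singleton_iff] at h
      rw [h, fwdQ_mk, fwdPoly_X3]
      exact IsLocalization.map_units A ⟨_, htMem' n⟩
  · rw [map_one]; exact isUnit_one
  · rw [map_mul]; exact ha.mul hb

/-- forward map on localizations -/
noncomputable def F : B →ₐ[ℂ] A :=
  IsLocalization.liftAlgHom (M := flopSubmonoid n) (S := B) (fwdQ_units n)

lemma F_alg (r : flopBase n) : F n (algebraMap (flopBase n) B r) = fwdQ n r :=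
  IsLocalization.lift_eq _ r

/-- the unit y in B -/
noncomputable def uy : Bˣ :=
  (IsLocalization.map_units B (⟨_, hyMem n⟩ : flopSubmonoid n)).unit

lemma uy_coe : (uy n : B) = algebraMap (flopBase n) B (Ideal.Quotient.mk _ (X 1)) := rfl

/-- backward map on polynomial ring -/
noncomputable def bwdPoly : P3 →ₐ[ℂ] B :=
  aeval ![algebraMap (flopBase n) B (Ideal.Quotient.mk _ (X 0)),
    algebraMap (flopBase n) B (Ideal.Quotient.mk _ (X 2)) * ((uy n)⁻¹ : Bˣ),
    algebraMap (flopBase n) B (Ideal.Quotient.mk _ (X 3))]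

lemma bwdPoly_X0 : bwdPoly n (X 0) =
    algebraMap (flopBase n) B (Ideal.Quotient.mk _ (X 0)) := by simp [bwdPoly]
lemma bwdPoly_X1 : bwdPoly n (X 1) =
    algebraMap (flopBase n) B (Ideal.Quotient.mk _ (X 2)) * ((uy n)⁻¹ : Bˣ) := by simp [bwdPoly]
lemma bwdPoly_X2 : bwdPoly n (X 2) =
    algebraMap (flopBase n) B (Ideal.Quotient.mk _ (X 3)) := by simp [bwdPoly]

lemma alg_rel : algebraMap (flopBase n) B (Ideal.Quotient.mk _ (X 0 * X 2 - X 3 ^ n * X 1)) =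
    algebraMap (flopBase n) B (Ideal.Quotient.mk _ (X 1 * X 1)) := by
  congr 1
  rw [Ideal.Quotient.eq, Ideal.mem_span_singleton]
  exact ⟨1, by ring⟩

lemma bwdPoly_p : bwdPoly n (X 0 * X 1 - X 2 ^ n) =
    algebraMap (flopBase n) B (Ideal.Quotient.mk _ (X 1)) := by
  have hu : IsUnit (algebraMap (flopBase n) B (Ideal.Quotient.mk _ (X 1))) :=
    IsLocalization.map_units B ⟨_, hyMem n⟩
  apply hu.mul_right_cancel
  rw [map_sub, map_mul, map_pow, bwdPoly_X0, bwdPoly_X1, bwdPoly_X2]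
  rw [← uy_coe, sub_mul, mul_assoc, mul_assoc, Units.inv_mul, mul_one, uy_coe]
  rw [← map_mul, ← map_mul, ← map_pow, ← map_pow, ← map_mul, ← map_mul, ← map_mul, ← map_mul,
    ← map_sub, ← map_sub, alg_rel]

lemma bwd_units : ∀ s : polySubmonoid n, IsUnit ((bwdPoly n) s) := by
  rintro ⟨s, hs⟩
  show IsUnit (bwdPoly n s)
  refine Submonoid.closure_induction (fun x hx => ?_) ?_ (fun a b _ _ ha hb => ?_) hs
  · rcases hx with h | h
    · rw [h, bwdPoly_X2]
      exact IsLocalization.map_units B ⟨_, htMem n⟩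
    · rw [Set.mem_singleton_iff] at h
      rw [h, bwdPoly_p]
      exact IsLocalization.map_units B ⟨_, hyMem n⟩
  · rw [map_one]; exact isUnit_one
  · rw [map_mul]; exact ha.mul hb

/-- backward map on localizations -/
noncomputable def G : A →ₐ[ℂ] B :=
  IsLocalization.liftAlgHom (M := polySubmonoid n) (S := A) (P := B) (bwd_units n)

lemma G_alg (r : P3) : G n (algebraMap P3 A r) = bwdPoly n r :=
  IsLocalization.lift_eq _ r

lemma GF_id : (G n).comp (F n) = AlgHom.id ℂ B := by
  apply AlgHom.ext
  intro a
  have key : ((G n).comp (F n)).toRingHom = (AlgHom.id ℂ B).toRingHom := by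
    apply IsLocalization.ringHom_ext (S := B) (P := B) (flopSubmonoid n)
    apply Ideal.Quotient.ringHom_ext
    apply MvPolynomial.ringHom_ext
    · intro r
      show G n (F n (algebraMap (flopBase n) B (Ideal.Quotient.mk _ (C r)))) =
        algebraMap (flopBase n) B (Ideal.Quotient.mk _ (C r))
      rw [F_alg, fwdQ_mk]
      have h : fwdPoly n (C r) = algebraMap ℂ A r := by
        rw [← MvPolynomial.algebraMap_eq, AlgHom.commutes]
      rw [h, AlgHom.commutes,
        show (Ideal.Quotient.mk _ (C r) : flopBase n) = algebraMap ℂ (flopBase n) r from rfl,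
        ← IsScalarTower.algebraMap_apply ℂ (flopBase n) B]
    · intro i
      fin_cases i
      · show G n (F n (algebraMap (flopBase n) B (Ideal.Quotient.mk _ (X 0)))) =
          algebraMap (flopBase n) B (Ideal.Quotient.mk _ (X 0))
        rw [F_alg, fwdQ_mk, fwdPoly_X0, G_alg, bwdPoly_X0]
      · show G n (F n (algebraMap (flopBase n) B (Ideal.Quotient.mk _ (X 1)))) =
          algebraMap (flopBase n) B (Ideal.Quotient.mk _ (X 1))
        rw [F_alg, fwdQ_mk, fwdPoly_X1, G_alg, bwdPoly_p]
      · show G n (F n (algebraMap (flopBase n) B (Ideal.Quotient.mk _ (X 2)))) =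
          algebraMap (flopBase n) B (Ideal.Quotient.mk _ (X 2))
        rw [F_alg, fwdQ_mk, fwdPoly_X2, G_alg, map_mul, bwdPoly_p, bwdPoly_X1,
          ← uy_coe, Units.inv_mul_cancel_right]
      · show G n (F n (algebraMap (flopBase n) B (Ideal.Quotient.mk _ (X 3)))) =
          algebraMap (flopBase n) B (Ideal.Quotient.mk _ (X 3))
        rw [F_alg, fwdQ_mk, fwdPoly_X3, G_alg, bwdPoly_X2]
  exact RingHom.congr_fun key a

lemma FG_id : (F n).comp (G n) = AlgHom.id ℂ A := by
  apply AlgHom.ext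
  intro a
  have key : ((F n).comp (G n)).toRingHom = (AlgHom.id ℂ A).toRingHom := by
    apply IsLocalization.ringHom_ext (polySubmonoid n)
    apply MvPolynomial.ringHom_ext
    · intro r
      show F n (G n (algebraMap P3 A (C r))) = algebraMap P3 A (C r)
      rw [G_alg]
      have h : bwdPoly n (C r) = algebraMap ℂ B r := by
        rw [← MvPolynomial.algebraMap_eq, AlgHom.commutes]
      rw [h, AlgHom.commutes, ← MvPolynomial.algebraMap_eq,
        ← IsScalarTower.algebraMap_apply ℂ P3 A]
    · intro i
      fin_cases i
      · show F n (G n (algebraMap P3 A (X 0))) = algebraMap P3 A (X 0)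
        rw [G_alg, bwdPoly_X0, F_alg, fwdQ_mk, fwdPoly_X0]
      · show F n (G n (algebraMap P3 A (X 1))) = algebraMap P3 A (X 1)
        rw [G_alg, bwdPoly_X1, map_mul, F_alg, fwdQ_mk, fwdPoly_X2]
        have hu : IsUnit (algebraMap P3 A (X 0 * X 1 - X 2 ^ n)) :=
          IsLocalization.map_units A ⟨_, hpMem n⟩
        apply hu.mul_right_cancel
        rw [mul_assoc]
        have h3 : F n ((uy n)⁻¹ : Bˣ) * algebraMap P3 A (X 0 * X 1 - X 2 ^ n) = 1 := by
          have h4 : F n ((uy n : B)) = algebraMap P3 A (X 0 * X 1 - X 2 ^ n) := by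
            rw [uy_coe, F_alg, fwdQ_mk, fwdPoly_X1]
          rw [← h4, ← map_mul, Units.inv_mul, map_one]
        rw [h3, mul_one, ← map_mul]
      · show F n (G n (algebraMap P3 A (X 2))) = algebraMap P3 A (X 2)
        rw [G_alg, bwdPoly_X2, F_alg, fwdQ_mk, fwdPoly_X3]
  exact RingHom.congr_fun key a

end Aux

theorem stmt3 (n : ℕ) (hn : 1 ≤ n) :
    ∃ e : Localization (flopSubmonoid n) ≃ₐ[ℂ] Localization (polySubmonoid n),
      -- x ↦ x
      e (algebraMap (flopBase n) _ (Ideal.Quotient.mk _ (X 0))) =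
        algebraMap (MvPolynomial (Fin 3) ℂ) _ (X 0) ∧
      -- t ↦ t
      e (algebraMap (flopBase n) _ (Ideal.Quotient.mk _ (X 3))) =
        algebraMap (MvPolynomial (Fin 3) ℂ) _ (X 2) ∧
      -- y ↦ xw − t^n
      e (algebraMap (flopBase n) _ (Ideal.Quotient.mk _ (X 1))) =
        algebraMap (MvPolynomial (Fin 3) ℂ) _ (X 0 * X 1 - X 2 ^ n) ∧
      -- z ↦ w(xw − t^n)
      e (algebraMap (flopBase n) _ (Ideal.Quotient.mk _ (X 2))) =
        algebraMap (MvPolynomial (Fin 3) ℂ) _ (X 1 * (X 0 * X 1 - X 2 ^ n)) ∧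
      -- the inverse sends w to z/y
      e.symm (algebraMap (MvPolynomial (Fin 3) ℂ) _ (X 1)) =
        Localization.mk (Ideal.Quotient.mk _ (X 2))
          ⟨Ideal.Quotient.mk _ (X 1),
            Submonoid.subset_closure (Set.mem_insert _ _)⟩ := by
  refine ⟨AlgEquiv.ofAlgHom (F n) (G n) (FG_id n) (GF_id n), ?_, ?_, ?_, ?_, ?_⟩
  · show F n _ = _
    rw [F_alg, fwdQ_mk, fwdPoly_X0]
  · show F n _ = _
    rw [F_alg, fwdQ_mk, fwdPoly_X3]
  · show F n _ = _
    rw [F_alg, fwdQ_mk, fwdPoly_X1]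
  · show F n _ = _
    rw [F_alg, fwdQ_mk, fwdPoly_X2]
  · show G n _ = _
    rw [G_alg, bwdPoly_X1, Localization.mk_eq_mk']
    have hu : IsUnit ((uy n : Localization (flopSubmonoid n))) := (uy n).isUnit
    apply hu.mul_right_cancel
    rw [Units.inv_mul_cancel_right]
    have hs := IsLocalization.mk'_spec (Localization (flopSubmonoid n))
      (Ideal.Quotient.mk _ (X 2) : flopBase n)
      (⟨Ideal.Quotient.mk _ (X 1), hyMem n⟩ : flopSubmonoid n)
    rw [uy_coe]
    exact hs.symm
  done
end

section
/- Let n ≥ 1 be an integer and let A be the localization of R = C[x,y,z,t]/(xz − y(y+t^n)) at the multiplicative set generated by y and t. Then the family of elements of A consisting of the monomials x^a y^b t^c for integers a ≥ 1 and b, c ∈ Z, together with the monomials z^a y^b t^c for integers a ≥ 1 and b, c ∈ Z, together with the monomials y^b t^c for b, c ∈ Z, is a basis of A as a C-vector space. -/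
open MvPolynomial

/-- `A = C[x, y^{±1}, z, t^{±1}]/(xz − y(y+t^n))`, the coordinate ring of the
cluster variety `U`. -/
noncomputable abbrev clusterRing (n : ℕ) : Type := Localization (flopSubmonoid n)

/-- The theta-basis family: given units `uy`, `ut` of `A` (representing `y` and `t`),
it consists of the monomials `x^a y^b t^c` (`a ≥ 1`), the monomials `z^a y^b t^c`
(`a ≥ 1`), and the monomials `y^b t^c`. -/
noncomputable def thetaFamily (n : ℕ) (uy ut : (clusterRing n)ˣ) :
    (ℕ+ × ℤ × ℤ) ⊕ (ℕ+ × ℤ × ℤ) ⊕ (ℤ × ℤ) → clusterRing n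
  | .inl (a, b, c) =>
      algebraMap (flopBase n) _ (Ideal.Quotient.mk _ (X 0)) ^ (a : ℕ) *
        ((uy ^ b : (clusterRing n)ˣ) : clusterRing n) *
        ((ut ^ c : (clusterRing n)ˣ) : clusterRing n)
  | .inr (.inl (a, b, c)) =>
      algebraMap (flopBase n) _ (Ideal.Quotient.mk _ (X 2)) ^ (a : ℕ) *
        ((uy ^ b : (clusterRing n)ˣ) : clusterRing n) *
        ((ut ^ c : (clusterRing n)ˣ) : clusterRing n)
  | .inr (.inr (b, c)) =>
      ((uy ^ b : (clusterRing n)ˣ) : clusterRing n) *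
        ((ut ^ c : (clusterRing n)ˣ) : clusterRing n)

set_option maxHeartbeats 1000000
set_option synthInstance.maxHeartbeats 1000000

namespace ThetaAux

abbrev C2 : Type := AddMonoidAlgebra ℂ (ℤ × ℤ)
abbrev L3 : Type := AddMonoidAlgebra C2 ℤ

/-- unit of a group algebra given by a single group element -/
noncomputable def cunit {k : Type*} [CommRing k] {G : Type*} [AddCommGroup G] (g : G) :
    (AddMonoidAlgebra k G)ˣ where
  val := AddMonoidAlgebra.single g 1
  inv := AddMonoidAlgebra.single (-g) 1
  val_inv := by rw [AddMonoidAlgebra.single_mul_single]; simp [AddMonoidAlgebra.one_def]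
  inv_val := by rw [AddMonoidAlgebra.single_mul_single]; simp [AddMonoidAlgebra.one_def]

@[simp] lemma cunit_val {k : Type*} [CommRing k] {G : Type*} [AddCommGroup G] (g : G) :
    ((cunit g : (AddMonoidAlgebra k G)ˣ) : AddMonoidAlgebra k G)
      = AddMonoidAlgebra.single g 1 := rfl

lemma cunit_add {k : Type*} [CommRing k] {G : Type*} [AddCommGroup G] (g h : G) :
    (cunit (g + h) : (AddMonoidAlgebra k G)ˣ) = cunit g * cunit h := by
  ext
  simp [cunit, AddMonoidAlgebra.single_mul_single]

noncomputable def cunitHom (k : Type*) [CommRing k] (G : Type*) [AddCommGroup G] :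
    G →+ Additive (AddMonoidAlgebra k G)ˣ :=
  AddMonoidHom.mk' (fun g => Additive.ofMul (cunit g)) (by
    intro a b
    simp [cunit_add])

lemma cunit_zsmul {k : Type*} [CommRing k] {G : Type*} [AddCommGroup G] (b : ℤ) (g : G) :
    (cunit (b • g) : (AddMonoidAlgebra k G)ˣ) = cunit g ^ b := by
  have h := map_zsmul (cunitHom k G) b g
  have : (cunitHom k G) (b • g) = Additive.ofMul ((cunit g : (AddMonoidAlgebra k G)ˣ) ^ b) := by
    rw [h]; rfl
  simpa [cunitHom] using congrArg Additive.toMul this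


noncomputable def Yu : C2ˣ := cunit ((1:ℤ), (0:ℤ))
noncomputable def Tu : C2ˣ := cunit ((0:ℤ), (1:ℤ))

lemma YT_val (b c : ℤ) :
    ((Yu ^ b * Tu ^ c : C2ˣ) : C2) = AddMonoidAlgebra.single (b, c) 1 := by
  have : (Yu ^ b * Tu ^ c : C2ˣ) = cunit (b, c) := by
    rw [Yu, Tu, ← cunit_zsmul, ← cunit_zsmul, ← cunit_add]
    norm_num
  rw [this, cunit_val]

/-- the "z-coefficient" element  w = Y(Y+T^n) -/
noncomputable def wel (n : ℕ) : C2 := (Yu : C2) * ((Yu : C2) + (Tu : C2) ^ n)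

lemma wel_ne_zero (n : ℕ) : wel n ≠ 0 := by
  have h1 : (Yu : C2) ≠ 0 := Units.ne_zero _
  have h2 : (Yu : C2) + (Tu : C2) ^ n ≠ 0 := by
    intro h
    have := congrArg (fun p : C2 => p.coeff ((1:ℤ), (0:ℤ))) h
    have hT : ((Tu : C2) ^ n) = AddMonoidAlgebra.single ((0:ℤ), (n:ℤ)) 1 := by
      rw [Tu, cunit_val, AddMonoidAlgebra.single_pow]
      norm_num
    simp only [Yu, cunit_val, hT] at this
    rw [AddMonoidAlgebra.coeff_add, Finsupp.add_apply] at this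
    rw [AddMonoidAlgebra.coeff_single, AddMonoidAlgebra.coeff_single,
      Finsupp.single_apply, Finsupp.single_apply] at this
    simp at this
  exact mul_ne_zero h1 h2

/-- the model family in `L3` -/
noncomputable def modelFam (n : ℕ) : (Σ _k : ℤ, ℤ × ℤ) → L3 :=
  fun ix => AddMonoidAlgebra.single ix.1
    (wel n ^ (-ix.1).toNat * ((Yu ^ ix.2.1 * Tu ^ ix.2.2 : C2ˣ) : C2))

set_option maxHeartbeats 400000 in
lemma modelFam_li (n : ℕ) : LinearIndependent ℂ (modelFam n) := by
  have base : LinearIndependent ℂ fun bc : ℤ × ℤ => (AddMonoidAlgebra.single bc 1 : C2) := by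
    have := (AddMonoidAlgebra.basis (ℤ × ℤ) ℂ).linearIndependent
    exact this
  have fibre : ∀ k : ℤ, LinearIndependent ℂ
      (fun bc : ℤ × ℤ => wel n ^ (-k).toNat * ((Yu ^ bc.1 * Tu ^ bc.2 : C2ˣ) : C2)) := by
    intro k
    have h := base.map' (LinearMap.mulLeft ℂ (wel n ^ (-k).toNat)) (by
      rw [LinearMap.ker_eq_bot]
      exact fun a b hab => mul_left_cancel₀ (pow_ne_zero _ (wel_ne_zero n)) hab)
    have heq : (fun bc : ℤ × ℤ => wel n ^ (-k).toNat * ((Yu ^ bc.1 * Tu ^ bc.2 : C2ˣ) : C2))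
        = ⇑(LinearMap.mulLeft ℂ (wel n ^ (-k).toNat)) ∘ fun bc : ℤ × ℤ =>
            (AddMonoidAlgebra.single bc 1 : C2) := by
      funext bc
      simp [YT_val bc.1 bc.2]
    rw [heq]
    exact h
  have := Finsupp.linearIndependent_single (R := ℂ) (M := C2) (ι := ℤ)
    (φ := fun _ => ℤ × ℤ)
    (f := fun k bc => wel n ^ (-k).toNat * ((Yu ^ bc.1 * Tu ^ bc.2 : C2ˣ) : C2)) fibre
  exact this.map' (AddMonoidAlgebra.coeffLinearEquiv ℂ).symm.toLinearMap (LinearEquiv.ker _)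

/-- the images of the four variables -/
noncomputable def varImage (n : ℕ) : Fin 4 → L3
  | 0 => AddMonoidAlgebra.single (1 : ℤ) 1
  | 1 => AddMonoidAlgebra.single (0 : ℤ) (Yu : C2)
  | 2 => AddMonoidAlgebra.single (-1 : ℤ) (wel n)
  | 3 => AddMonoidAlgebra.single (0 : ℤ) (Tu : C2)

noncomputable def psi (n : ℕ) : MvPolynomial (Fin 4) ℂ →ₐ[ℂ] L3 :=
  aeval (varImage n)

lemma psi_rel (n : ℕ) :
    psi n (X 0 * X 2 - X 1 ^ 2 - X 1 * X 3 ^ n) = 0 := by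
  simp only [psi, map_sub, map_mul, map_pow, aeval_X]
  show varImage n 0 * varImage n 2 - varImage n 1 ^ 2 - varImage n 1 * varImage n 3 ^ n = 0
  simp only [varImage]
  rw [AddMonoidAlgebra.single_mul_single, AddMonoidAlgebra.single_pow,
    AddMonoidAlgebra.single_pow, AddMonoidAlgebra.single_mul_single]
  simp only [smul_zero, add_zero, zero_add, one_mul, add_neg_cancel]
  rw [← AddMonoidAlgebra.single_sub, ← AddMonoidAlgebra.single_sub]
  have hw : wel n - (Yu : C2) ^ 2 - (Yu : C2) * (Tu : C2) ^ n = 0 := by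
    rw [wel]; ring
  rw [hw]
  exact AddMonoidAlgebra.single_zero _

noncomputable def phi0 (n : ℕ) : flopBase n →ₐ[ℂ] L3 :=
  Ideal.Quotient.liftₐ _ (psi n) (by
    intro a ha
    rw [Ideal.mem_span_singleton] at ha
    obtain ⟨c, rfl⟩ := ha
    rw [map_mul, psi_rel, zero_mul])

lemma phi0_y (n : ℕ) : phi0 n (Ideal.Quotient.mk _ (X 1)) = AddMonoidAlgebra.single (0:ℤ) (Yu : C2) := by
  show psi n (X 1) = _
  rw [psi, aeval_X]; rfl

lemma phi0_t (n : ℕ) : phi0 n (Ideal.Quotient.mk _ (X 3)) = AddMonoidAlgebra.single (0:ℤ) (Tu : C2) := by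
  show psi n (X 3) = _
  rw [psi, aeval_X]; rfl

lemma phi0_x (n : ℕ) : phi0 n (Ideal.Quotient.mk _ (X 0)) = AddMonoidAlgebra.single (1:ℤ) 1 := by
  show psi n (X 0) = _
  rw [psi, aeval_X]; rfl

lemma phi0_z (n : ℕ) : phi0 n (Ideal.Quotient.mk _ (X 2)) = AddMonoidAlgebra.single (-1:ℤ) (wel n) := by
  show psi n (X 2) = _
  rw [psi, aeval_X]; rfl

lemma single_zero_unit_isUnit (g : ℤ × ℤ) :
    IsUnit (AddMonoidAlgebra.single (0:ℤ) ((cunit g : C2ˣ) : C2) : L3) := by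
  refine IsUnit.of_mul_eq_one (AddMonoidAlgebra.single (0:ℤ) (((cunit g)⁻¹ : C2ˣ) : C2)) ?_
  rw [AddMonoidAlgebra.single_mul_single, add_zero, Units.mul_inv]
  exact AddMonoidAlgebra.one_def.symm

lemma phi0_units (n : ℕ) : ∀ s : flopSubmonoid n, IsUnit (phi0 n s) := by
  rintro ⟨s, hs⟩
  induction hs using Submonoid.closure_induction with
  | mem x hx =>
    show IsUnit (phi0 n x)
    simp only [Set.mem_insert_iff, Set.mem_singleton_iff] at hx
    rcases hx with rfl | rfl
    · rw [phi0_y]; exact single_zero_unit_isUnit _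
    · rw [phi0_t]; exact single_zero_unit_isUnit _
  | one => show IsUnit (phi0 n 1); simp
  | mul x y _ _ hx hy =>
    show IsUnit (phi0 n (x * y))
    rw [map_mul]; exact hx.mul hy

noncomputable def phi (n : ℕ) : clusterRing n →ₐ[ℂ] L3 :=
  IsLocalization.liftAlgHom (M := flopSubmonoid n) (S := clusterRing n) (f := phi0 n) (phi0_units n)

lemma phi_algebraMap (n : ℕ) (r : flopBase n) :
    phi n (algebraMap (flopBase n) (clusterRing n) r) = phi0 n r := by
  simp [phi, IsLocalization.liftAlgHom_apply, IsLocalization.lift_eq]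



noncomputable def uy (n : ℕ) : (clusterRing n)ˣ :=
  (IsLocalization.map_units (M := flopSubmonoid n) (clusterRing n)
    ⟨Ideal.Quotient.mk _ (X 1), Submonoid.subset_closure (Set.mem_insert _ _)⟩).unit

noncomputable def ut (n : ℕ) : (clusterRing n)ˣ :=
  (IsLocalization.map_units (M := flopSubmonoid n) (clusterRing n)
    ⟨Ideal.Quotient.mk _ (X 3), Submonoid.subset_closure (Set.mem_insert_of_mem _ rfl)⟩).unit

lemma uy_val (n : ℕ) : ((uy n : (clusterRing n)ˣ) : clusterRing n)
    = algebraMap (flopBase n) _ (Ideal.Quotient.mk _ (X 1)) := IsUnit.unit_spec _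

lemma ut_val (n : ℕ) : ((ut n : (clusterRing n)ˣ) : clusterRing n)
    = algebraMap (flopBase n) _ (Ideal.Quotient.mk _ (X 3)) := IsUnit.unit_spec _

noncomputable def nu : C2ˣ →* L3ˣ :=
  Units.map (AddMonoidAlgebra.singleZeroRingHom (R := C2) (M := ℤ)).toMonoidHom

lemma nu_val (u : C2ˣ) : ((nu u : L3ˣ) : L3) = AddMonoidAlgebra.single (0:ℤ) (u : C2) := rfl

lemma phi_uy_zpow (n : ℕ) (b : ℤ) :
    phi n ((uy n ^ b : (clusterRing n)ˣ) : clusterRing n)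
      = AddMonoidAlgebra.single (0:ℤ) ((Yu ^ b : C2ˣ) : C2) := by
  have hUy : Units.map ((phi n).toRingHom.toMonoidHom) (uy n) = nu Yu := by
    refine Units.ext ?_
    rw [Units.coe_map]
    show phi n ((uy n : (clusterRing n)ˣ) : clusterRing n) = _
    rw [uy_val, phi_algebraMap, phi0_y, nu_val]
  calc phi n ((uy n ^ b : (clusterRing n)ˣ) : clusterRing n)
      = ((Units.map ((phi n).toRingHom.toMonoidHom) (uy n ^ b) : L3ˣ) : L3) := by
        rw [Units.coe_map]; rfl
    _ = ((Units.map ((phi n).toRingHom.toMonoidHom) (uy n) ^ b : L3ˣ) : L3) := by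
        rw [map_zpow]
    _ = ((nu (Yu ^ b) : L3ˣ) : L3) := by rw [hUy, ← map_zpow]
    _ = _ := nu_val _

lemma phi_ut_zpow (n : ℕ) (c : ℤ) :
    phi n ((ut n ^ c : (clusterRing n)ˣ) : clusterRing n)
      = AddMonoidAlgebra.single (0:ℤ) ((Tu ^ c : C2ˣ) : C2) := by
  have hUt : Units.map ((phi n).toRingHom.toMonoidHom) (ut n) = nu Tu := by
    refine Units.ext ?_
    rw [Units.coe_map]
    show phi n ((ut n : (clusterRing n)ˣ) : clusterRing n) = _
    rw [ut_val, phi_algebraMap, phi0_t, nu_val]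
  calc phi n ((ut n ^ c : (clusterRing n)ˣ) : clusterRing n)
      = ((Units.map ((phi n).toRingHom.toMonoidHom) (ut n ^ c) : L3ˣ) : L3) := by
        rw [Units.coe_map]; rfl
    _ = ((Units.map ((phi n).toRingHom.toMonoidHom) (ut n) ^ c : L3ˣ) : L3) := by
        rw [map_zpow]
    _ = ((nu (Tu ^ c) : L3ˣ) : L3) := by rw [hUt, ← map_zpow]
    _ = _ := nu_val _

def sigma : (ℕ+ × ℤ × ℤ) ⊕ (ℕ+ × ℤ × ℤ) ⊕ (ℤ × ℤ) → Σ _k : ℤ, ℤ × ℤ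
  | .inl (a, b, c) => ⟨(a : ℤ), (b, c)⟩
  | .inr (.inl (a, b, c)) => ⟨-(a : ℤ), (b, c)⟩
  | .inr (.inr (b, c)) => ⟨(0 : ℤ), (b, c)⟩

lemma sigma_inj : Function.Injective sigma := by
  rintro (⟨a1, b1, c1⟩ | ⟨a1, b1, c1⟩ | ⟨b1, c1⟩) (⟨a2, b2, c2⟩ | ⟨a2, b2, c2⟩ | ⟨b2, c2⟩) h <;>
    simp only [sigma, Sigma.mk.inj_iff, heq_eq_eq, Prod.mk.injEq] at h
  · have : a1 = a2 := by
      have := h.1; exact_mod_cast PNat.coe_injective (by exact_mod_cast this)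
    simp [this, h.2.1, h.2.2]
  · have h1 := a1.pos; have h2 := a2.pos
    have := h.1; omega
  · have h1 := a1.pos; have := h.1; omega
  · have h1 := a1.pos; have h2 := a2.pos
    have := h.1; omega
  · have : a1 = a2 := by
      have := h.1
      exact_mod_cast PNat.coe_injective (by exact_mod_cast (neg_injective this))
    simp [this, h.2.1, h.2.2]
  · have h1 := a1.pos; have := h.1; omega
  · have h2 := a2.pos; have := h.1; omega
  · have h2 := a2.pos; have := h.1; omega
  · simp [h.1, h.2]

lemma phi_theta (n : ℕ) :
    ⇑(phi n) ∘ thetaFamily n (uy n) (ut n) = modelFam n ∘ sigma := by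
  funext i
  rcases i with ⟨a, b, c⟩ | ⟨a, b, c⟩ | ⟨b, c⟩
  · show phi n (algebraMap (flopBase n) _ (Ideal.Quotient.mk _ (X 0)) ^ (a:ℕ) * _ * _) = _
    rw [map_mul, map_mul, map_pow, phi_algebraMap, phi0_x, phi_uy_zpow, phi_ut_zpow,
      AddMonoidAlgebra.single_pow, AddMonoidAlgebra.single_mul_single,
      AddMonoidAlgebra.single_mul_single]
    show AddMonoidAlgebra.single _ _ = AddMonoidAlgebra.single ((a:ℤ))
      (wel n ^ (-(a:ℤ)).toNat * ((Yu ^ b * Tu ^ c : C2ˣ) : C2))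
    rw [show (-(a:ℤ)).toNat = 0 from Int.toNat_eq_zero.mpr (by simp), pow_zero, one_mul]
    congr 1
    · ring
    · rw [one_pow, one_mul, Units.val_mul]
  · show phi n (algebraMap (flopBase n) _ (Ideal.Quotient.mk _ (X 2)) ^ (a:ℕ) * _ * _) = _
    rw [map_mul, map_mul, map_pow, phi_algebraMap, phi0_z, phi_uy_zpow, phi_ut_zpow,
      AddMonoidAlgebra.single_pow, AddMonoidAlgebra.single_mul_single,
      AddMonoidAlgebra.single_mul_single]
    show AddMonoidAlgebra.single _ _ = AddMonoidAlgebra.single (-(a:ℤ))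
      (wel n ^ (-(-(a:ℤ))).toNat * ((Yu ^ b * Tu ^ c : C2ˣ) : C2))
    rw [neg_neg]
    congr 1
    · ring
    · rw [Units.val_mul, Int.toNat_natCast, mul_assoc]
  · show phi n (_ * _) = _
    rw [map_mul, phi_uy_zpow, phi_ut_zpow, AddMonoidAlgebra.single_mul_single]
    show AddMonoidAlgebra.single _ _ = AddMonoidAlgebra.single (0:ℤ)
      (wel n ^ (-(0:ℤ)).toNat * ((Yu ^ b * Tu ^ c : C2ˣ) : C2))
    norm_num [Units.val_mul]

lemma theta_li (n : ℕ) : LinearIndependent ℂ (thetaFamily n (uy n) (ut n)) := by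
  have h := (modelFam_li n).comp sigma sigma_inj
  rw [← phi_theta n] at h
  exact LinearIndependent.of_comp (phi n).toLinearMap h



noncomputable def MM (n : ℕ) : Submodule ℂ (clusterRing n) :=
  Submodule.span ℂ (Set.range (thetaFamily n (uy n) (ut n)))

def shift : ((ℕ+ × ℤ × ℤ) ⊕ (ℕ+ × ℤ × ℤ) ⊕ (ℤ × ℤ)) → ℤ → ℤ →
    ((ℕ+ × ℤ × ℤ) ⊕ (ℕ+ × ℤ × ℤ) ⊕ (ℤ × ℤ))
  | .inl (a, b, c), d, e => .inl (a, b + d, c + e)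
  | .inr (.inl (a, b, c)), d, e => .inr (.inl (a, b + d, c + e))
  | .inr (.inr (b, c)), d, e => .inr (.inr (b + d, c + e))

lemma theta_shift (n : ℕ) (i : (ℕ+ × ℤ × ℤ) ⊕ (ℕ+ × ℤ × ℤ) ⊕ (ℤ × ℤ)) (d e : ℤ) :
    thetaFamily n (uy n) (ut n) (shift i d e)
      = thetaFamily n (uy n) (ut n) i * ((uy n ^ d : (clusterRing n)ˣ) : clusterRing n)
          * ((ut n ^ e : (clusterRing n)ˣ) : clusterRing n) := by
  rcases i with ⟨a, b, c⟩ | ⟨a, b, c⟩ | ⟨b, c⟩ <;>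
    simp only [shift, thetaFamily, zpow_add, Units.val_mul] <;> ring

lemma mul_mem_span (n : ℕ) {u : clusterRing n}
    (hu : ∀ i, thetaFamily n (uy n) (ut n) i * u ∈ MM n) :
    ∀ m ∈ MM n, m * u ∈ MM n := by
  intro m hm
  induction hm using Submodule.span_induction with
  | mem x hx => obtain ⟨i, rfl⟩ := hx; exact hu i
  | zero => simpa using (MM n).zero_mem
  | add x y _ _ hx hy => rw [add_mul]; exact add_mem hx hy
  | smul a x _ hx => rw [smul_mul_assoc]; exact Submodule.smul_mem _ _ hx

lemma theta_mem (n : ℕ) (i) : thetaFamily n (uy n) (ut n) i ∈ MM n :=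
  Submodule.subset_span ⟨i, rfl⟩

lemma mul_zpow_mem (n : ℕ) (d e : ℤ) :
    ∀ m ∈ MM n, m * (((uy n ^ d : (clusterRing n)ˣ) : clusterRing n)
      * ((ut n ^ e : (clusterRing n)ˣ) : clusterRing n)) ∈ MM n :=
  mul_mem_span n (fun i => by
    rw [← mul_assoc, ← theta_shift]
    exact theta_mem n _)

/-- `z^a y^b t^c` is in the span, for any `a : ℕ`. -/
lemma zpow_mem (n : ℕ) (a : ℕ) (b c : ℤ) :
    algebraMap (flopBase n) (clusterRing n) (Ideal.Quotient.mk _ (X 2)) ^ a *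
      ((uy n ^ b : (clusterRing n)ˣ) : clusterRing n) * ((ut n ^ c : (clusterRing n)ˣ) : clusterRing n) ∈ MM n := by
  rcases Nat.eq_zero_or_pos a with rfl | ha
  · rw [pow_zero, one_mul]
    exact theta_mem n (.inr (.inr (b, c)))
  · exact theta_mem n (.inr (.inl (⟨a, ha⟩, b, c)))

lemma xpow_mem (n : ℕ) (a : ℕ) (b c : ℤ) :
    algebraMap (flopBase n) (clusterRing n) (Ideal.Quotient.mk _ (X 0)) ^ a *
      ((uy n ^ b : (clusterRing n)ˣ) : clusterRing n) * ((ut n ^ c : (clusterRing n)ˣ) : clusterRing n) ∈ MM n := by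
  rcases Nat.eq_zero_or_pos a with rfl | ha
  · rw [pow_zero, one_mul]
    exact theta_mem n (.inr (.inr (b, c)))
  · exact theta_mem n (.inl (⟨a, ha⟩, b, c))

lemma rel_R (n : ℕ) :
    (Ideal.Quotient.mk _ (X 0) * Ideal.Quotient.mk _ (X 2) : flopBase n)
      = Ideal.Quotient.mk _ (X 1) ^ 2
        + Ideal.Quotient.mk _ (X 1) * Ideal.Quotient.mk _ (X 3) ^ n := by
  rw [← map_mul, ← map_pow, ← map_pow, ← map_mul, ← map_add, Ideal.Quotient.eq]
  refine Ideal.subset_span ?_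
  show _ = X 0 * X 2 - X 1 ^ 2 - X 1 * X 3 ^ n
  ring

lemma rel_A (n : ℕ) :
    algebraMap (flopBase n) (clusterRing n) (Ideal.Quotient.mk _ (X 0)) *
      algebraMap (flopBase n) (clusterRing n) (Ideal.Quotient.mk _ (X 2))
      = ((uy n : (clusterRing n)ˣ) : clusterRing n) ^ 2
        + ((uy n : (clusterRing n)ˣ) : clusterRing n) * ((ut n : (clusterRing n)ˣ) : clusterRing n) ^ n := by
  rw [uy_val, ut_val, ← map_mul, rel_R, map_add, map_mul, map_pow, map_pow]

lemma zpow_coe_add_two (n : ℕ) (b : ℤ) :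
    ((uy n ^ (b + 2) : (clusterRing n)ˣ) : clusterRing n)
      = ((uy n ^ b : (clusterRing n)ˣ) : clusterRing n) * ((uy n : (clusterRing n)ˣ) : clusterRing n) ^ 2 := by
  rw [zpow_add, Units.val_mul]
  congr 1

lemma zpow_coe_add_one (n : ℕ) (u : (clusterRing n)ˣ) (b : ℤ) :
    ((u ^ (b + 1) : (clusterRing n)ˣ) : clusterRing n)
      = ((u ^ b : (clusterRing n)ˣ) : clusterRing n) * (u : clusterRing n) := by
  rw [zpow_add, Units.val_mul, zpow_one]

lemma zpow_coe_add_nat (n : ℕ) (u : (clusterRing n)ˣ) (c : ℤ) (m : ℕ) :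
    ((u ^ (c + (m:ℤ)) : (clusterRing n)ˣ) : clusterRing n)
      = ((u ^ c : (clusterRing n)ˣ) : clusterRing n) * (u : clusterRing n) ^ m := by
  rw [zpow_add, Units.val_mul, zpow_natCast, Units.val_pow_eq_pow_val]

lemma mul_x_mem (n : ℕ) :
    ∀ m ∈ MM n, m * algebraMap (flopBase n) (clusterRing n) (Ideal.Quotient.mk _ (X 0)) ∈ MM n := by
  refine mul_mem_span n ?_
  rintro (⟨a, b, c⟩ | ⟨a, b, c⟩ | ⟨b, c⟩)
  · show algebraMap (flopBase n) _ (Ideal.Quotient.mk _ (X 0)) ^ (a:ℕ) * _ * _ * _ ∈ MM n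
    have : algebraMap (flopBase n) (clusterRing n) (Ideal.Quotient.mk _ (X 0)) ^ (a:ℕ) *
        ((uy n ^ b : (clusterRing n)ˣ) : clusterRing n) * ((ut n ^ c : (clusterRing n)ˣ) : clusterRing n) *
        algebraMap (flopBase n) (clusterRing n) (Ideal.Quotient.mk _ (X 0))
        = algebraMap (flopBase n) (clusterRing n) (Ideal.Quotient.mk _ (X 0)) ^ ((a:ℕ)+1) *
        ((uy n ^ b : (clusterRing n)ˣ) : clusterRing n) * ((ut n ^ c : (clusterRing n)ˣ) : clusterRing n) := by
      ring
    rw [this]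
    exact xpow_mem n _ b c
  · show algebraMap (flopBase n) _ (Ideal.Quotient.mk _ (X 2)) ^ (a:ℕ) * _ * _ * _ ∈ MM n
    obtain ⟨a', ha'⟩ : ∃ a' : ℕ, (a:ℕ) = a' + 1 := ⟨(a:ℕ) - 1, by have := a.pos; omega⟩
    rw [ha']
    have key : algebraMap (flopBase n) (clusterRing n) (Ideal.Quotient.mk _ (X 2)) ^ (a'+1) *
        ((uy n ^ b : (clusterRing n)ˣ) : clusterRing n) * ((ut n ^ c : (clusterRing n)ˣ) : clusterRing n) *
        algebraMap (flopBase n) (clusterRing n) (Ideal.Quotient.mk _ (X 0))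
        = algebraMap (flopBase n) (clusterRing n) (Ideal.Quotient.mk _ (X 2)) ^ a' *
            ((uy n ^ (b+2) : (clusterRing n)ˣ) : clusterRing n) * ((ut n ^ c : (clusterRing n)ˣ) : clusterRing n)
          + algebraMap (flopBase n) (clusterRing n) (Ideal.Quotient.mk _ (X 2)) ^ a' *
            ((uy n ^ (b+1) : (clusterRing n)ˣ) : clusterRing n) * ((ut n ^ (c+(n:ℤ)) : (clusterRing n)ˣ) : clusterRing n) := by
      rw [zpow_coe_add_two, zpow_coe_add_one, zpow_coe_add_nat]
      have hrel := rel_A n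
      linear_combination (algebraMap (flopBase n) (clusterRing n) (Ideal.Quotient.mk _ (X 2)) ^ a' *
        ((uy n ^ b : (clusterRing n)ˣ) : clusterRing n) * ((ut n ^ c : (clusterRing n)ˣ) : clusterRing n)) * hrel
    rw [key]
    exact add_mem (zpow_mem n a' _ _) (zpow_mem n a' _ _)
  · show ((uy n ^ b : (clusterRing n)ˣ) : clusterRing n) * _ * _ ∈ MM n
    have : ((uy n ^ b : (clusterRing n)ˣ) : clusterRing n) * ((ut n ^ c : (clusterRing n)ˣ) : clusterRing n) *
        algebraMap (flopBase n) (clusterRing n) (Ideal.Quotient.mk _ (X 0))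
        = algebraMap (flopBase n) (clusterRing n) (Ideal.Quotient.mk _ (X 0)) ^ 1 *
        ((uy n ^ b : (clusterRing n)ˣ) : clusterRing n) * ((ut n ^ c : (clusterRing n)ˣ) : clusterRing n) := by
      rw [pow_one]; ring
    rw [this]
    exact xpow_mem n 1 b c

lemma mul_z_mem (n : ℕ) :
    ∀ m ∈ MM n, m * algebraMap (flopBase n) (clusterRing n) (Ideal.Quotient.mk _ (X 2)) ∈ MM n := by
  refine mul_mem_span n ?_
  rintro (⟨a, b, c⟩ | ⟨a, b, c⟩ | ⟨b, c⟩)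
  · show algebraMap (flopBase n) _ (Ideal.Quotient.mk _ (X 0)) ^ (a:ℕ) * _ * _ * _ ∈ MM n
    obtain ⟨a', ha'⟩ : ∃ a' : ℕ, (a:ℕ) = a' + 1 := ⟨(a:ℕ) - 1, by have := a.pos; omega⟩
    rw [ha']
    have key : algebraMap (flopBase n) (clusterRing n) (Ideal.Quotient.mk _ (X 0)) ^ (a'+1) *
        ((uy n ^ b : (clusterRing n)ˣ) : clusterRing n) * ((ut n ^ c : (clusterRing n)ˣ) : clusterRing n) *
        algebraMap (flopBase n) (clusterRing n) (Ideal.Quotient.mk _ (X 2))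
        = algebraMap (flopBase n) (clusterRing n) (Ideal.Quotient.mk _ (X 0)) ^ a' *
            ((uy n ^ (b+2) : (clusterRing n)ˣ) : clusterRing n) * ((ut n ^ c : (clusterRing n)ˣ) : clusterRing n)
          + algebraMap (flopBase n) (clusterRing n) (Ideal.Quotient.mk _ (X 0)) ^ a' *
            ((uy n ^ (b+1) : (clusterRing n)ˣ) : clusterRing n) * ((ut n ^ (c+(n:ℤ)) : (clusterRing n)ˣ) : clusterRing n) := by
      rw [zpow_coe_add_two, zpow_coe_add_one, zpow_coe_add_nat]
      have hrel := rel_A n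
      linear_combination (algebraMap (flopBase n) (clusterRing n) (Ideal.Quotient.mk _ (X 0)) ^ a' *
        ((uy n ^ b : (clusterRing n)ˣ) : clusterRing n) * ((ut n ^ c : (clusterRing n)ˣ) : clusterRing n)) * hrel
    rw [key]
    exact add_mem (xpow_mem n a' _ _) (xpow_mem n a' _ _)
  · show algebraMap (flopBase n) _ (Ideal.Quotient.mk _ (X 2)) ^ (a:ℕ) * _ * _ * _ ∈ MM n
    have : algebraMap (flopBase n) (clusterRing n) (Ideal.Quotient.mk _ (X 2)) ^ (a:ℕ) *
        ((uy n ^ b : (clusterRing n)ˣ) : clusterRing n) * ((ut n ^ c : (clusterRing n)ˣ) : clusterRing n) *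
        algebraMap (flopBase n) (clusterRing n) (Ideal.Quotient.mk _ (X 2))
        = algebraMap (flopBase n) (clusterRing n) (Ideal.Quotient.mk _ (X 2)) ^ ((a:ℕ)+1) *
        ((uy n ^ b : (clusterRing n)ˣ) : clusterRing n) * ((ut n ^ c : (clusterRing n)ˣ) : clusterRing n) := by
      ring
    rw [this]
    exact zpow_mem n _ b c
  · show ((uy n ^ b : (clusterRing n)ˣ) : clusterRing n) * _ * _ ∈ MM n
    have : ((uy n ^ b : (clusterRing n)ˣ) : clusterRing n) * ((ut n ^ c : (clusterRing n)ˣ) : clusterRing n) *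
        algebraMap (flopBase n) (clusterRing n) (Ideal.Quotient.mk _ (X 2))
        = algebraMap (flopBase n) (clusterRing n) (Ideal.Quotient.mk _ (X 2)) ^ 1 *
        ((uy n ^ b : (clusterRing n)ˣ) : clusterRing n) * ((ut n ^ c : (clusterRing n)ˣ) : clusterRing n) := by
      rw [pow_one]; ring
    rw [this]
    exact zpow_mem n 1 b c

lemma mul_y_mem (n : ℕ) :
    ∀ m ∈ MM n, m * algebraMap (flopBase n) (clusterRing n) (Ideal.Quotient.mk _ (X 1)) ∈ MM n := by
  intro m hm
  have h := mul_zpow_mem n 1 0 m hm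
  simpa [← uy_val n] using h

lemma mul_t_mem (n : ℕ) :
    ∀ m ∈ MM n, m * algebraMap (flopBase n) (clusterRing n) (Ideal.Quotient.mk _ (X 3)) ∈ MM n := by
  intro m hm
  have h := mul_zpow_mem n 0 1 m hm
  simpa [← ut_val n] using h

lemma one_mem_MM (n : ℕ) : (1 : clusterRing n) ∈ MM n := by
  have := theta_mem n (.inr (.inr (0, 0)))
  simpa [thetaFamily] using this

lemma algebraMap_mem_MM (n : ℕ) (p : MvPolynomial (Fin 4) ℂ) :
    algebraMap (flopBase n) (clusterRing n) (Ideal.Quotient.mk _ p) ∈ MM n := by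
  induction p using MvPolynomial.induction_on with
  | C a =>
    have h1 : (Ideal.Quotient.mk (Ideal.span {(X 0 * X 2 - X 1 ^ 2 - X 1 * X 3 ^ n : MvPolynomial (Fin 4) ℂ)}) (MvPolynomial.C a) : flopBase n)
        = algebraMap ℂ (flopBase n) a := rfl
    rw [h1, ← IsScalarTower.algebraMap_apply, Algebra.algebraMap_eq_smul_one]
    exact Submodule.smul_mem _ _ (one_mem_MM n)
  | add p q hp hq =>
    rw [map_add, map_add]
    exact add_mem hp hq
  | mul_X p i hp =>
    rw [map_mul, map_mul]
    fin_cases i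
    · exact mul_x_mem n _ hp
    · exact mul_y_mem n _ hp
    · exact mul_z_mem n _ hp
    · exact mul_t_mem n _ hp

lemma submonoid_rep (n : ℕ) : ∀ s ∈ flopSubmonoid n,
    ∃ d e : ℕ, algebraMap (flopBase n) (clusterRing n) s
      = (((uy n : (clusterRing n)ˣ) : clusterRing n)) ^ d * (((ut n : (clusterRing n)ˣ) : clusterRing n)) ^ e := by
  intro s hsmem
  induction hsmem using Submonoid.closure_induction with
    | mem x hx =>
      simp only [Set.mem_insert_iff, Set.mem_singleton_iff] at hx
      rcases hx with rfl | rfl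
      · exact ⟨1, 0, by rw [uy_val]; simp⟩
      · exact ⟨0, 1, by rw [ut_val]; simp⟩
    | one => exact ⟨0, 0, by simp⟩
    | mul x y _ _ hx hy =>
      obtain ⟨d1, e1, h1⟩ := hx
      obtain ⟨d2, e2, h2⟩ := hy
      exact ⟨d1 + d2, e1 + e2, by rw [map_mul, h1, h2, pow_add, pow_add]; ring⟩

lemma MM_top (n : ℕ) : MM n = ⊤ := by
  rw [eq_top_iff]
  rintro q -
  obtain ⟨rs, hq⟩ := IsLocalization.surj (flopSubmonoid n) q
  obtain ⟨r, s⟩ := rs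
  dsimp only at hq
  obtain ⟨d, e, hse⟩ := submonoid_rep n s s.2
  obtain ⟨p, hp⟩ := Ideal.Quotient.mk_surjective
    (I := Ideal.span {(X 0 * X 2 - X 1 ^ 2 - X 1 * X 3 ^ n : MvPolynomial (Fin 4) ℂ)}) r
  have hrmem : algebraMap (flopBase n) (clusterRing n) r ∈ MM n := by
    rw [← hp]; exact algebraMap_mem_MM n p
  have hyd : (((uy n : (clusterRing n)ˣ) : clusterRing n)) ^ d *
      ((uy n ^ (-(d:ℤ)) : (clusterRing n)ˣ) : clusterRing n) = 1 := by
    rw [← Units.val_pow_eq_pow_val, ← Units.val_mul, ← zpow_natCast, ← zpow_add,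
      add_neg_cancel, zpow_zero, Units.val_one]
  have hte : (((ut n : (clusterRing n)ˣ) : clusterRing n)) ^ e *
      ((ut n ^ (-(e:ℤ)) : (clusterRing n)ˣ) : clusterRing n) = 1 := by
    rw [← Units.val_pow_eq_pow_val, ← Units.val_mul, ← zpow_natCast, ← zpow_add,
      add_neg_cancel, zpow_zero, Units.val_one]
  have hq' : q = algebraMap (flopBase n) (clusterRing n) r *
      (((uy n ^ (-(d:ℤ)) : (clusterRing n)ˣ) : clusterRing n) *
        ((ut n ^ (-(e:ℤ)) : (clusterRing n)ˣ) : clusterRing n)) := by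
    have step : q = q * (algebraMap (flopBase n) (clusterRing n) (s : flopBase n) *
        (((uy n ^ (-(d:ℤ)) : (clusterRing n)ˣ) : clusterRing n) *
          ((ut n ^ (-(e:ℤ)) : (clusterRing n)ˣ) : clusterRing n))) := by
      rw [hse]
      calc q = q * ((((uy n : (clusterRing n)ˣ) : clusterRing n)) ^ d *
            ((uy n ^ (-(d:ℤ)) : (clusterRing n)ˣ) : clusterRing n) *
            ((((ut n : (clusterRing n)ˣ) : clusterRing n)) ^ e *
            ((ut n ^ (-(e:ℤ)) : (clusterRing n)ˣ) : clusterRing n))) := by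
            rw [hyd, hte]; ring
        _ = _ := by ring
    rw [step, ← mul_assoc, hq]
  rw [hq']
  exact mul_zpow_mem n _ _ _ hrmem

end ThetaAux

theorem stmt4 (n : ℕ) (hn : 1 ≤ n) :
    ∃ uy ut : (clusterRing n)ˣ,
      (uy : clusterRing n) = algebraMap (flopBase n) _ (Ideal.Quotient.mk _ (X 1)) ∧
      (ut : clusterRing n) = algebraMap (flopBase n) _ (Ideal.Quotient.mk _ (X 3)) ∧
      LinearIndependent ℂ (thetaFamily n uy ut) ∧
      Submodule.span ℂ (Set.range (thetaFamily n uy ut)) = ⊤ := by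
  exact ⟨ThetaAux.uy n, ThetaAux.ut n, ThetaAux.uy_val n, ThetaAux.ut_val n,
    ThetaAux.theta_li n, ThetaAux.MM_top n⟩
end

section
/- Fix an integer n ≥ 1. Let φ be the C-algebra homomorphism from the polynomial ring C[X_1, …, X_{n+3}] to the Laurent polynomial ring C[u^{±1}, v^{±1}, w^{±1}] determined by X_1 ↦ uv(1+u), X_2 ↦ v(1+u), X_3 ↦ w, and X_{i+3} ↦ u^i v^i w for i = 1, …, n. Then the kernel of φ is exactly the ideal generated by the 2×2 minors of the 2×(n+1) matrix whose columns are (X_1 + X_2, X_1 X_2) and (X_{k+2}, X_{k+3}) for k = 1, …, n (i.e. whose first row is (X_1+X_2, X_3, X_4, …, X_{n+2}) and second row is (X_1 X_2, X_4, X_5, …, X_{n+3})). -/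
open MvPolynomial

/-- The Laurent polynomial ring `C[u^{±1}, v^{±1}, w^{±1}]`, realised as the group
algebra of `ℤ³` over `ℂ`. -/
noncomputable abbrev LaurentRing : Type := AddMonoidAlgebra ℂ (Fin 3 → ℤ)

/-- The Laurent monomial `u`. -/
noncomputable def uL : LaurentRing := AddMonoidAlgebra.single ![1, 0, 0] 1

/-- The Laurent monomial `v`. -/
noncomputable def vL : LaurentRing := AddMonoidAlgebra.single ![0, 1, 0] 1

/-- The Laurent monomial `w`. -/
noncomputable def wL : LaurentRing := AddMonoidAlgebra.single ![0, 0, 1] 1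

/-- The images of the variables `X_1, …, X_{n+3}` (0-indexed as `X 0, …, X (n+2)`):
`X_1 ↦ uv(1+u)`, `X_2 ↦ v(1+u)`, `X_3 ↦ w`, and `X_{i+3} ↦ u^i v^i w` for `i = 1, …, n`. -/
noncomputable def thetaOf (n : ℕ) : Fin (n + 3) → LaurentRing := fun i =>
  if (i : ℕ) = 0 then uL * vL * (1 + uL)
  else if (i : ℕ) = 1 then vL * (1 + uL)
  else if (i : ℕ) = 2 then wL
  else (uL * vL) ^ ((i : ℕ) - 2) * wL

/-- First row `(X_1 + X_2, X_3, X_4, …, X_{n+2})` of the matrix of the presentation. -/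
noncomputable def row1 (n : ℕ) : Fin (n + 1) → MvPolynomial (Fin (n + 3)) ℂ := fun k =>
  if (k : ℕ) = 0 then X 0 + X 1 else X ⟨(k : ℕ) + 1, by omega⟩

/-- Second row `(X_1 X_2, X_4, X_5, …, X_{n+3})` of the matrix of the presentation. -/
noncomputable def row2 (n : ℕ) : Fin (n + 1) → MvPolynomial (Fin (n + 3)) ℂ := fun k =>
  if (k : ℕ) = 0 then X 0 * X 1 else X ⟨(k : ℕ) + 2, by have := k.isLt; omega⟩

namespace Stmt7

noncomputable def Igen (n : ℕ) : Ideal (MvPolynomial (Fin (n + 3)) ℂ) :=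
  Ideal.span {m | ∃ i j : Fin (n + 1), m = row1 n i * row2 n j - row1 n j * row2 n i}

noncomputable def Xc (n k : ℕ) : MvPolynomial (Fin (n + 3)) ℂ :=
  X ⟨min k n + 2, by omega⟩

lemma X_congr {n : ℕ} (a b : ℕ) (ha : a < n + 3) (hb : b < n + 3) (e : a = b) :
    (X ⟨a, ha⟩ : MvPolynomial (Fin (n + 3)) ℂ) = X ⟨b, hb⟩ := by subst e; rfl

lemma Xc_eq (n k : ℕ) (hk : k ≤ n) (h : k + 2 < n + 3) :
    Xc n k = X ⟨k + 2, h⟩ := by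
  rw [Xc]; exact X_congr _ _ _ _ (by omega)

lemma row1_succ (n k : ℕ) (h : k + 1 < n + 1) (h2 : k + 2 < n + 3) :
    row1 n ⟨k + 1, h⟩ = X ⟨k + 2, h2⟩ := by
  rw [row1, if_neg (by simp)]

lemma row1_zero (n : ℕ) (h : 0 < n + 1) : row1 n ⟨0, h⟩ = X 0 + X 1 := by
  rw [row1, if_pos rfl]

lemma row2_succ (n k : ℕ) (h : k + 1 < n + 1) (h2 : k + 3 < n + 3) :
    row2 n ⟨k + 1, h⟩ = X ⟨k + 3, h2⟩ := by
  rw [row2, if_neg (by simp)]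

lemma row2_zero (n : ℕ) (h : 0 < n + 1) : row2 n ⟨0, h⟩ = X 0 * X 1 := by
  rw [row2, if_pos rfl]

lemma gen_mem (n : ℕ) (i j : Fin (n + 1)) :
    row1 n i * row2 n j - row1 n j * row2 n i ∈ Igen n :=
  Ideal.subset_span ⟨i, j, rfl⟩

lemma slide1 (n x y : ℕ) (hx : x + 1 ≤ n) (hy1 : 1 ≤ y) (hy2 : y ≤ n) :
    Xc n x * Xc n y - Xc n (x + 1) * Xc n (y - 1) ∈ Igen n := by
  have h := gen_mem n ⟨x + 1, by omega⟩ ⟨(y - 1) + 1, by omega⟩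
  rw [row1_succ n x _ (by omega), row2_succ n (y-1) _ (by omega),
    row1_succ n (y-1) _ (by omega), row2_succ n x _ (by omega)] at h
  have e : (X ⟨y - 1 + 3, by omega⟩ : MvPolynomial (Fin (n + 3)) ℂ) = X ⟨y + 2, by omega⟩ :=
    X_congr _ _ _ _ (by omega)
  rw [e] at h
  rw [Xc_eq n x (by omega) (by omega), Xc_eq n y (by omega) (by omega),
    Xc_eq n (x+1) (by omega) (by omega), Xc_eq n (y-1) (by omega) (by omega)]
  convert h using 1
  ring

lemma slide (n j x y : ℕ) (h1 : x + j ≤ n) (h2 : j ≤ y) (h3 : y ≤ n) :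
    Xc n x * Xc n y - Xc n (x + j) * Xc n (y - j) ∈ Igen n := by
  induction j with
  | zero => simp only [Nat.add_zero, Nat.sub_zero, sub_self]; exact zero_mem _
  | succ m ih =>
    have hmem := ih (by omega) (by omega)
    have h2' := slide1 n (x + m) (y - m) (by omega) (by omega) (by omega)
    have e : Xc n x * Xc n y - Xc n (x + (m+1)) * Xc n (y - (m+1)) =
        (Xc n x * Xc n y - Xc n (x + m) * Xc n (y - m)) +
        (Xc n (x+m) * Xc n (y-m) - Xc n (x + m + 1) * Xc n (y - m - 1)) := by
      rw [show x + (m + 1) = x + m + 1 by omega, show y - (m + 1) = y - m - 1 by omega]; ring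
    rw [e]
    exact add_mem hmem h2'

lemma a_rel (n m : ℕ) (hm : m + 1 ≤ n) :
    X 0 * X 1 * Xc n m - (X 0 + X 1) * Xc n (m + 1) ∈ Igen n := by
  have h := gen_mem n ⟨0, by omega⟩ ⟨m + 1, by omega⟩
  rw [row1_zero, row2_zero, row1_succ n m _ (by omega), row2_succ n m _ (by omega)] at h
  have e : (X ⟨m + 3, by omega⟩ : MvPolynomial (Fin (n + 3)) ℂ) = X ⟨m + 1 + 2, by omega⟩ :=
    X_congr _ _ _ _ (by omega)
  rw [e] at h
  rw [Xc_eq n m (by omega) (by omega), Xc_eq n (m+1) (by omega) (by omega)]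
  have h' := neg_mem h
  convert h' using 1
  ring



lemma theta_c (n k : ℕ) (h : k + 2 < n + 3) :
    thetaOf n ⟨k + 2, h⟩ = (uL * vL) ^ k * wL := by
  rw [thetaOf]
  simp only
  rw [if_neg (by simp), if_neg (by simp)]
  rcases Nat.eq_zero_or_pos k with hk | hk
  · subst hk; rw [if_pos rfl]; simp
  · rw [if_neg (by simp; omega)]
    congr 1

lemma phi_Xc (n k : ℕ) (hk : k ≤ n) :
    aeval (thetaOf n) (Xc n k) = (uL * vL) ^ k * wL := by
  rw [Xc_eq n k hk (by omega), aeval_X, theta_c]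

lemma theta_zero (n : ℕ) : thetaOf n 0 = uL * vL * (1 + uL) := by
  rw [thetaOf]; norm_num

lemma theta_one (n : ℕ) : thetaOf n 1 = vL * (1 + uL) := by
  rw [thetaOf]
  have : ((1 : Fin (n+3)) : ℕ) = 1 := by simp
  rw [this]; norm_num

lemma theta_c3 (n l : ℕ) (h : l + 3 < n + 3) :
    thetaOf n ⟨l + 3, h⟩ = (uL * vL) ^ (l + 1) * wL :=
  theta_c n (l + 1) h

lemma Igen_le_ker (n : ℕ) :
    Igen n ≤ RingHom.ker (aeval (thetaOf n) : MvPolynomial (Fin (n + 3)) ℂ →ₐ[ℂ] LaurentRing) := by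
  rw [Igen, Ideal.span_le]
  rintro m ⟨i, j, rfl⟩
  simp only [SetLike.mem_coe, RingHom.mem_ker, map_sub, map_mul, sub_eq_zero]
  obtain ⟨iv, hi⟩ := i
  obtain ⟨jv, hj⟩ := j
  rcases iv with _ | k <;> rcases jv with _ | l
  · rfl
  · rw [row1_zero, row2_zero, row1_succ n l _ (by omega), row2_succ n l _ (by omega)]
    rw [map_mul, map_add, aeval_X, aeval_X, aeval_X, aeval_X, theta_zero, theta_one,
      theta_c n l (by omega), theta_c3 n l (by omega)]
    rw [pow_succ]
    ring
  · rw [row1_zero, row2_zero, row1_succ n k _ (by omega), row2_succ n k _ (by omega)]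
    rw [map_mul, map_add, aeval_X, aeval_X, aeval_X, aeval_X, theta_zero, theta_one,
      theta_c n k (by omega), theta_c3 n k (by omega)]
    rw [pow_succ]
    ring
  · rw [row1_succ n k _ (by omega), row2_succ n l _ (by omega),
      row1_succ n l _ (by omega), row2_succ n k _ (by omega)]
    rw [aeval_X, aeval_X, aeval_X, aeval_X, theta_c n k (by omega), theta_c n l (by omega),
      theta_c3 n l (by omega), theta_c3 n k (by omega)]
    rw [pow_succ, pow_succ]
    ring



noncomputable def phmon (a b M d : ℕ) : LaurentRing :=
  uL ^ (a + M) * vL ^ (a + b + M) * wL ^ d * (1 + uL) ^ (a + b)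

lemma uL_pow (a : ℕ) : uL ^ a = AddMonoidAlgebra.single ![(a : ℤ), 0, 0] 1 := by
  rw [uL, AddMonoidAlgebra.single_pow, one_pow]
  congr 1
  funext i
  fin_cases i <;> simp

lemma vL_pow (a : ℕ) : vL ^ a = AddMonoidAlgebra.single ![0, (a : ℤ), 0] 1 := by
  rw [vL, AddMonoidAlgebra.single_pow, one_pow]
  congr 1
  funext i
  fin_cases i <;> simp

lemma wL_pow (a : ℕ) : wL ^ a = AddMonoidAlgebra.single ![0, 0, (a : ℤ)] 1 := by
  rw [wL, AddMonoidAlgebra.single_pow, one_pow]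
  congr 1
  funext i
  fin_cases i <;> simp

lemma uvw_pow (a b c : ℕ) :
    uL ^ a * vL ^ b * wL ^ c = AddMonoidAlgebra.single ![(a : ℤ), b, c] 1 := by
  rw [uL_pow, vL_pow, wL_pow, AddMonoidAlgebra.single_mul_single,
    AddMonoidAlgebra.single_mul_single]
  norm_num

lemma phmon_expand (a b M d : ℕ) :
    phmon a b M d = ∑ k ∈ Finset.range (a + b + 1),
      AddMonoidAlgebra.single ![((a + M + k : ℕ) : ℤ), ((a + b + M : ℕ) : ℤ), (d : ℤ)]
        ((a + b).choose k : ℂ) := by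
  rw [phmon, show (1 : LaurentRing) + uL = uL + 1 by ring, add_pow]
  simp only [one_pow, mul_one]
  rw [Finset.mul_sum]
  refine Finset.sum_congr rfl fun k hk => ?_
  have : uL ^ (a + M) * vL ^ (a + b + M) * wL ^ d * (uL ^ k * ((a+b).choose k : LaurentRing)) =
      (uL ^ (a + M + k) * vL ^ (a + b + M) * wL ^ d) * ((a+b).choose k : LaurentRing) := by
    ring
  rw [this, uvw_pow]
  have hcast : ((a+b).choose k : LaurentRing) = ((a+b).choose k : ℂ) • (1 : LaurentRing) := by
    rw [Algebra.smul_def, mul_one]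
    exact (map_natCast (algebraMap ℂ LaurentRing) _).symm
  rw [hcast, mul_smul_comm, mul_one, AddMonoidAlgebra.smul_single, smul_eq_mul, mul_one]



lemma phmon_apply (a b M d : ℕ) (g : Fin 3 → ℤ) :
    (phmon a b M d).coeff g = ∑ k ∈ Finset.range (a + b + 1),
      if (![((a + M + k : ℕ) : ℤ), ((a + b + M : ℕ) : ℤ), (d : ℤ)] : Fin 3 → ℤ) = g
      then ((a + b).choose k : ℂ) else 0 := by
  rw [phmon_expand, AddMonoidAlgebra.coeff_sum, Finset.sum_apply']
  exact Finset.sum_congr rfl fun k _ => Finsupp.single_apply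

lemma vec3_eq {x y z x' y' z' : ℤ} :
    (![x, y, z] : Fin 3 → ℤ) = ![x', y', z'] ↔ x = x' ∧ y = y' ∧ z = z' := by
  constructor
  · intro h
    exact ⟨congrFun h 0, congrFun h 1, congrFun h 2⟩
  · rintro ⟨rfl, rfl, rfl⟩; rfl



lemma smul_apply' (c : ℂ) (x : LaurentRing) (g : Fin 3 → ℤ) : (c • x).coeff g = c * x.coeff g := by
  rw [show ((c • x).coeff g) = (c • x.coeff) g from rfl, Finsupp.smul_apply, smul_eq_mul]

lemma indep {ι : Type} (n : ℕ) (s : Finset ι) (A B M D : ι → ℕ)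
    (hinj : ∀ p ∈ s, ∀ q ∈ s,
      A p = A q → B p = B q → M p = M q → D p = D q → p = q)
    (hle : ∀ p ∈ s, M p ≤ n * D p)
    (hgood : ∀ p ∈ s, A p = 0 ∨ B p = 0 ∨ M p = n * D p)
    (c : ι → ℂ)
    (hsum : ∑ p ∈ s, c p • phmon (A p) (B p) (M p) (D p) = 0) :
    ∀ p ∈ s, c p = 0 := by
  classical
  by_contra hcon
  push_neg at hcon
  obtain ⟨p₀, hp₀s, hc₀⟩ := hcon
  set V₀ := A p₀ + B p₀ + M p₀ with hV₀
  set d₀ := D p₀ with hd₀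
  obtain ⟨N, hN⟩ : ∃ N, n * d₀ = N := ⟨_, rfl⟩
  set T' := s.filter (fun p => c p ≠ 0 ∧ A p + B p + M p = V₀ ∧ D p = d₀) with hT'
  have hp₀T' : p₀ ∈ T' := by
    rw [hT', Finset.mem_filter]
    exact ⟨hp₀s, hc₀, rfl, rfl⟩
  have hT's : ∀ p ∈ T', p ∈ s := fun p hp => (Finset.mem_filter.mp hp).1
  -- evaluation of the sum at a point
  have hev : ∀ g : Fin 3 → ℤ, ∑ p ∈ s, c p *
      (∑ k ∈ Finset.range (A p + B p + 1),
        if (![((A p + M p + k : ℕ) : ℤ), ((A p + B p + M p : ℕ) : ℤ), ((D p : ℕ) : ℤ)] :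
          Fin 3 → ℤ) = g then ((A p + B p).choose k : ℂ) else 0) = 0 := by
    intro g
    have h1 : (∑ p ∈ s, c p • phmon (A p) (B p) (M p) (D p)).coeff g = 0 := by
      rw [hsum]; rfl
    rw [AddMonoidAlgebra.coeff_sum, Finset.sum_apply'] at h1
    have h1' : ∑ p ∈ s, c p * (phmon (A p) (B p) (M p) (D p)).coeff g = 0 :=
      Eq.trans (Finset.sum_congr rfl fun p _ => (smul_apply' _ _ _).symm) h1
    calc ∑ p ∈ s, c p *
        (∑ k ∈ Finset.range (A p + B p + 1),
          if (![((A p + M p + k : ℕ) : ℤ), ((A p + B p + M p : ℕ) : ℤ), ((D p : ℕ) : ℤ)] :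
            Fin 3 → ℤ) = g then ((A p + B p).choose k : ℂ) else 0)
        = ∑ p ∈ s, c p * (phmon (A p) (B p) (M p) (D p)).coeff g :=
          Finset.sum_congr rfl (fun p _ => by rw [phmon_apply])
      _ = 0 := h1'
  -- a helper to finish off once we found the pivot
  have finish : ∀ (p' : ι), p' ∈ T' → ∀ (g : Fin 3 → ℤ),
      (∀ p ∈ s, (c p *
        (∑ k ∈ Finset.range (A p + B p + 1),
          if (![((A p + M p + k : ℕ) : ℤ), ((A p + B p + M p : ℕ) : ℤ), ((D p : ℕ) : ℤ)] :
            Fin 3 → ℤ) = g then ((A p + B p).choose k : ℂ) else 0)) =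
        if p = p' then c p' else 0) → False := by
    intro p' hp'T' g hclaim
    have h2 := hev g
    rw [Finset.sum_congr rfl hclaim, Finset.sum_ite_eq' s p' (fun _ => c p'),
      if_pos (hT's p' hp'T')] at h2
    exact (Finset.mem_filter.mp hp'T').2.1 h2
  by_cases hB : ∃ p ∈ T', 0 < B p
  · -- Case 1: pivot minimises A + M among B > 0
    set T'' := T'.filter (fun p => 0 < B p) with hT''
    obtain ⟨pm, hpmT'', hmin⟩ := T''.exists_min_image (fun p => A p + M p)
      (by obtain ⟨p, hp, hbp⟩ := hB; exact ⟨p, Finset.mem_filter.mpr ⟨hp, hbp⟩⟩)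
    have hpmT' : pm ∈ T' := (Finset.mem_filter.mp hpmT'').1
    have hpmB : 0 < B pm := (Finset.mem_filter.mp hpmT'').2
    obtain ⟨hpms, hcpm, hVpm, hDpm⟩ : pm ∈ s ∧ c pm ≠ 0 ∧ A pm + B pm + M pm = V₀ ∧ D pm = d₀ := by
      have := Finset.mem_filter.mp hpmT'
      exact ⟨this.1, this.2.1, this.2.2.1, this.2.2.2⟩
    refine finish pm hpmT' ![((A pm + M pm : ℕ) : ℤ), (V₀ : ℕ), (d₀ : ℕ)] fun p hps => ?_
    by_cases hpp : p = pm
    · subst hpp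
      rw [if_pos rfl]
      have : ∀ k ∈ Finset.range (A p + B p + 1),
          (if (![((A p + M p + k : ℕ) : ℤ), ((A p + B p + M p : ℕ) : ℤ), ((D p : ℕ) : ℤ)] :
            Fin 3 → ℤ) = ![((A p + M p : ℕ) : ℤ), (V₀ : ℕ), (d₀ : ℕ)]
          then ((A p + B p).choose k : ℂ) else 0) = if k = 0 then 1 else 0 := by
        intro k _
        by_cases hk : k = 0
        · subst hk
          rw [if_pos, if_pos rfl]
          · norm_num
          · rw [vec3_eq]
            refine ⟨by norm_num, by rw [hVpm], by rw [hDpm]⟩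
        · rw [if_neg hk, if_neg]
          rw [vec3_eq]
          rintro ⟨h1, -, -⟩
          rw [Nat.cast_inj] at h1
          omega
      rw [Finset.sum_congr rfl this, Finset.sum_ite_eq' _ 0 (fun _ => (1:ℂ)),
        if_pos (Finset.mem_range.mpr (by omega)), mul_one]
    · rw [if_neg hpp]
      by_cases hcp : c p = 0
      · rw [hcp, zero_mul]
      · rw [Finset.sum_eq_zero, mul_zero]
        intro k hk
        rw [Finset.mem_range] at hk
        rw [if_neg]
        rw [vec3_eq, Nat.cast_inj, Nat.cast_inj, Nat.cast_inj]
        rintro ⟨h1, h2, h3⟩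
        have hpT' : p ∈ T' := Finset.mem_filter.mpr ⟨hps, hcp, h2, h3⟩
        rcases Nat.eq_zero_or_pos (B p) with hBp | hBp
        · -- B p = 0 : then A p + M p = V₀ > A pm + M pm
          omega
        · have hpT'' : p ∈ T'' := Finset.mem_filter.mpr ⟨hpT', hBp⟩
          have hmin' := hmin p hpT''
          have hk0 : k = 0 ∧ A p + M p = A pm + M pm := by omega
          have hg1 := hgood p hps
          have hg2 := hgood pm hpms
          have hl1 := hle p hps
          have hl2 := hle pm hpms
          rw [h3, hN] at hg1 hl1
          rw [hDpm, hN] at hg2 hl2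
          have heq : A p = A pm ∧ B p = B pm ∧ M p = M pm := by omega
          exact hpp (hinj p hps pm hpms heq.1 heq.2.1 heq.2.2 (by omega))
  · -- Case 2: all B = 0 in the class; pivot maximises A
    push_neg at hB
    have hBz : ∀ p ∈ T', B p = 0 := fun p hp => by have := hB p hp; omega
    obtain ⟨pm, hpmT', hmax⟩ := T'.exists_max_image A ⟨p₀, hp₀T'⟩
    obtain ⟨hpms, hcpm, hVpm, hDpm⟩ : pm ∈ s ∧ c pm ≠ 0 ∧ A pm + B pm + M pm = V₀ ∧ D pm = d₀ := by
      have := Finset.mem_filter.mp hpmT'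
      exact ⟨this.1, this.2.1, this.2.2.1, this.2.2.2⟩
    have hBpm : B pm = 0 := hBz pm hpmT'
    refine finish pm hpmT' ![((V₀ + A pm : ℕ) : ℤ), (V₀ : ℕ), (d₀ : ℕ)] fun p hps => ?_
    by_cases hpp : p = pm
    · subst hpp
      rw [if_pos rfl]
      have : ∀ k ∈ Finset.range (A p + B p + 1),
          (if (![((A p + M p + k : ℕ) : ℤ), ((A p + B p + M p : ℕ) : ℤ), ((D p : ℕ) : ℤ)] :
            Fin 3 → ℤ) = ![((V₀ + A p : ℕ) : ℤ), (V₀ : ℕ), (d₀ : ℕ)]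
          then ((A p + B p).choose k : ℂ) else 0) = if k = A p then 1 else 0 := by
        intro k hk
        rw [Finset.mem_range] at hk
        by_cases hkA : k = A p
        · subst hkA
          rw [if_pos, if_pos rfl]
          · rw [hBpm, Nat.add_zero, Nat.choose_self, Nat.cast_one]
          · rw [vec3_eq]
            refine ⟨by rw [Nat.cast_inj]; omega, by rw [hVpm], by rw [hDpm]⟩
        · rw [if_neg hkA, if_neg]
          rw [vec3_eq, Nat.cast_inj]
          rintro ⟨h1, -, -⟩
          omega
      rw [Finset.sum_congr rfl this, Finset.sum_ite_eq' _ (A p) (fun _ => (1:ℂ)),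
        if_pos (Finset.mem_range.mpr (by omega)), mul_one]
    · rw [if_neg hpp]
      by_cases hcp : c p = 0
      · rw [hcp, zero_mul]
      · rw [Finset.sum_eq_zero, mul_zero]
        intro k hk
        rw [Finset.mem_range] at hk
        rw [if_neg]
        rw [vec3_eq, Nat.cast_inj, Nat.cast_inj, Nat.cast_inj]
        rintro ⟨h1, h2, h3⟩
        have hpT' : p ∈ T' := Finset.mem_filter.mpr ⟨hps, hcp, h2, h3⟩
        have hBp : B p = 0 := hBz p hpT'
        have hmax' := hmax p hpT'
        have hAp : A p = A pm ∧ k = A p := by omega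
        exact hpp (hinj p hps pm hpms hAp.1 (by omega) (by omega) (by omega))


/-- Product of the w-variables indexed by a list. -/
noncomputable def lProd (n : ℕ) (l : List ℕ) : MvPolynomial (Fin (n + 3)) ℂ :=
  (l.map (Xc n)).prod

lemma lProd_nil (n : ℕ) : lProd n [] = 1 := rfl

lemma lProd_cons (n k : ℕ) (t : List ℕ) : lProd n (k :: t) = Xc n k * lProd n t := by
  simp [lProd]

lemma lProd_perm (n : ℕ) {l l' : List ℕ} (h : l.Perm l') : lProd n l = lProd n l' :=
  (h.map (Xc n)).prod_eq

/-- Canonical product of w-variables of weight `M` and degree `d`. -/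
noncomputable def CanC (n M d : ℕ) : MvPolynomial (Fin (n + 3)) ℂ :=
  Xc n n ^ (M / n) * Xc n (M % n) ^ (if M % n = 0 then 0 else 1) *
    Xc n 0 ^ (d - M / n - (if M % n = 0 then 0 else 1))

noncomputable def CanMon (n a b M d : ℕ) : MvPolynomial (Fin (n + 3)) ℂ :=
  X 0 ^ a * X 1 ^ b * CanC n M d

lemma CanC_eq_zero (n : ℕ) (hn : 1 ≤ n) (q e : ℕ) :
    CanC n (n * q) (q + e) = Xc n n ^ q * Xc n 0 ^ e := by
  have h1 : n * q / n = q := Nat.mul_div_cancel_left q hn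
  have h2 : n * q % n = 0 := Nat.mul_mod_right n q
  rw [CanC, h1, h2, if_pos rfl, pow_zero, mul_one, show q + e - q - 0 = e by omega]

lemma CanC_eq_pos (n : ℕ) (hn : 1 ≤ n) (q r e : ℕ) (hr0 : 0 < r) (hrn : r < n) :
    CanC n (n * q + r) (q + 1 + e) = Xc n n ^ q * Xc n r * Xc n 0 ^ e := by
  have h1 : (n * q + r) / n = q := by
    rw [Nat.mul_add_div hn, Nat.div_eq_of_lt hrn]
    omega
  have h2 : (n * q + r) % n = r := by
    rw [Nat.mul_add_mod, Nat.mod_eq_of_lt hrn]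
  rw [CanC, h1, h2, if_neg (by omega), pow_one, show q + 1 + e - q - 1 = e by omega]

lemma step_lemma (n : ℕ) (hn : 1 ≤ n) (k M d : ℕ) (hk : k ≤ n) (hMd : M ≤ n * d) :
    Xc n k * CanC n M d - CanC n (M + k) (d + 1) ∈ Igen n := by
  have hq : M = n * (M / n) + M % n := (Nat.div_add_mod M n).symm
  have hr : M % n < n := Nat.mod_lt _ (by omega)
  set q := M / n with hqdef
  set r := M % n with hrdef
  rcases Nat.eq_zero_or_pos r with hr0 | hr0
  · -- r = 0
    have hM : M = n * q := by omega
    have hqd : q ≤ d := Nat.le_of_mul_le_mul_left (by omega : n * q ≤ n * d) (by omega)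
    obtain ⟨e, rfl⟩ : ∃ e, d = q + e := ⟨d - q, by omega⟩
    rw [hM, CanC_eq_zero n hn q e]
    rcases Nat.lt_or_ge k n with hkn | hkn
    · rcases Nat.eq_zero_or_pos k with hk0 | hk0
      · -- k = 0
        subst hk0
        rw [show n * q + 0 = n * q by omega, show q + e + 1 = q + (e + 1) by omega,
          CanC_eq_zero n hn q (e + 1)]
        rw [show Xc n 0 * (Xc n n ^ q * Xc n 0 ^ e) - Xc n n ^ q * Xc n 0 ^ (e + 1) = 0 by ring]
        exact zero_mem _
      · -- 0 < k < n
        rw [show q + e + 1 = q + 1 + e by omega, CanC_eq_pos n hn q k e hk0 hkn]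
        rw [show Xc n k * (Xc n n ^ q * Xc n 0 ^ e) - Xc n n ^ q * Xc n k * Xc n 0 ^ e = 0
          by ring]
        exact zero_mem _
    · -- k = n
      rw [show k = n by omega, show n * q + n = n * (q + 1) by ring,
        show q + e + 1 = (q + 1) + e by omega, CanC_eq_zero n hn (q + 1) e]
      rw [show Xc n n * (Xc n n ^ q * Xc n 0 ^ e) - Xc n n ^ (q + 1) * Xc n 0 ^ e = 0 by ring]
      exact zero_mem _
  · -- r > 0
    have hqd : q + 1 ≤ d := by
      have : q < d := Nat.lt_of_mul_lt_mul_left (by omega : n * q < n * d)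
      omega
    obtain ⟨e, rfl⟩ : ∃ e, d = q + 1 + e := ⟨d - q - 1, by omega⟩
    rw [show M = n * q + r by omega, CanC_eq_pos n hn q r e hr0 hr]
    rcases Nat.lt_or_ge (k + r) n with hkr | hkr
    · -- k + r < n
      rw [show n * q + r + k = n * q + (k + r) by omega,
        show q + 1 + e + 1 = q + 1 + (e + 1) by omega,
        CanC_eq_pos n hn q (k + r) (e + 1) (by omega) hkr]
      have hs := slide n k 0 (k + r) (by omega) (by omega) (by omega)
      rw [Nat.zero_add, show k + r - k = r by omega] at hs
      have hmul := Ideal.mul_mem_left _ (Xc n n ^ q * Xc n 0 ^ e) (neg_mem hs)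
      convert hmul using 1
      ring
    · rcases Nat.eq_or_lt_of_le hkr with hkr' | hkr'
      · -- k + r = n
        rw [show n * q + r + k = n * q + n by omega, show n * q + n = n * (q + 1) by ring,
          show q + 1 + e + 1 = (q + 1) + (e + 1) by omega,
          CanC_eq_zero n hn (q + 1) (e + 1)]
        have hs := slide n k 0 (k + r) (by omega) (by omega) (by omega)
        rw [Nat.zero_add, show k + r - k = r by omega, ← hkr'] at hs
        have hmul := Ideal.mul_mem_left _ (Xc n n ^ q * Xc n 0 ^ e) (neg_mem hs)
        convert hmul using 1
        ring
      · -- k + r > n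
        rw [show n * q + r + k = n * q + n + (k + r - n) by omega,
          show n * q + n = n * (q + 1) by ring,
          show q + 1 + e + 1 = (q + 1) + 1 + e by omega,
          CanC_eq_pos n hn (q + 1) (k + r - n) e (by omega) (by omega)]
        have hs := slide n (n - k) (k + r - n) n (by omega) (by omega) (by omega)
        rw [show k + r - n + (n - k) = r by omega, show n - (n - k) = k by omega] at hs
        have hmul := Ideal.mul_mem_left _ (Xc n n ^ q * Xc n 0 ^ e) (neg_mem hs)
        convert hmul using 1
        ring

lemma cansort (n : ℕ) (hn : 1 ≤ n) (l : List ℕ) (hl : ∀ x ∈ l, x ≤ n) :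
    lProd n l - CanC n l.sum l.length ∈ Igen n := by
  induction l with
  | nil =>
    have hcc : CanC n 0 0 = 1 := by
      have h := CanC_eq_zero n hn 0 0
      rw [show n * 0 = 0 by ring] at h
      simpa using h
    rw [lProd_nil, List.sum_nil, List.length_nil, hcc, sub_self]
    exact zero_mem _
  | cons k t ih =>
    have hk : k ≤ n := hl k (List.mem_cons_self)
    have ht : ∀ x ∈ t, x ≤ n := fun x hx => hl x (List.mem_cons_of_mem k hx)
    have hsum : t.sum ≤ n * t.length := by
      have := List.sum_le_card_nsmul t n ht
      simpa [smul_eq_mul, mul_comm] using this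
    have ih' := ih ht
    have h1 : lProd n (k :: t) - Xc n k * CanC n t.sum t.length ∈ Igen n := by
      rw [lProd_cons]
      have := Ideal.mul_mem_left _ (Xc n k) ih'
      convert this using 1
      ring
    have h2 := step_lemma n hn k t.sum t.length hk hsum
    have h3 := add_mem h1 h2
    rw [List.sum_cons, List.length_cons]
    convert h3 using 1
    rw [show k + t.sum = t.sum + k by omega, show t.length + 1 = t.length + 1 from rfl]
    ring


noncomputable def CanSet (n : ℕ) : Set (MvPolynomial (Fin (n + 3)) ℂ) :=
  {p | ∃ a b M d : ℕ, M ≤ n * d ∧ (a = 0 ∨ b = 0 ∨ M = n * d) ∧ p = CanMon n a b M d}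

noncomputable def MM (n : ℕ) : Submodule ℂ (MvPolynomial (Fin (n + 3)) ℂ) :=
  Submodule.restrictScalars ℂ (Igen n) ⊔ Submodule.span ℂ (CanSet n)

lemma Igen_le_MM (n : ℕ) {x : MvPolynomial (Fin (n + 3)) ℂ} (h : x ∈ Igen n) : x ∈ MM n :=
  Submodule.mem_sup_left h

lemma mem_MM_of_sub (n : ℕ) {x y : MvPolynomial (Fin (n + 3)) ℂ}
    (h1 : x - y ∈ Igen n) (h2 : y ∈ MM n) : x ∈ MM n := by
  have h3 := add_mem (Igen_le_MM n h1) h2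
  rwa [sub_add_cancel] at h3

noncomputable def lMon (n a b : ℕ) (l : List ℕ) : MvPolynomial (Fin (n + 3)) ℂ :=
  X 0 ^ a * X 1 ^ b * lProd n l

lemma sum_le_n_mul_len (n : ℕ) (l : List ℕ) (hl : ∀ x ∈ l, x ≤ n) :
    l.sum ≤ n * l.length := by
  have h := List.sum_le_card_nsmul l n hl
  rw [smul_eq_mul, mul_comm] at h
  exact h

lemma lMon_mem (n : ℕ) (hn : 1 ≤ n) : ∀ (Dg a b : ℕ) (l : List ℕ),
    a + b + l.length = Dg → (∀ x ∈ l, x ≤ n) → lMon n a b l ∈ MM n := by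
  intro Dg
  induction Dg using Nat.strong_induction_on with
  | _ Dg ih =>
    intro a b l hD hl
    by_cases hterm : a = 0 ∨ b = 0 ∨ l.sum = n * l.length
    · have hsort := cansort n hn l hl
      have hsum_le := sum_le_n_mul_len n l hl
      apply mem_MM_of_sub n (y := CanMon n a b l.sum l.length)
      · have hmul := Ideal.mul_mem_left _ (X 0 ^ a * X 1 ^ b) hsort
        convert hmul using 1
        rw [lMon, CanMon]
        ring
      · exact Submodule.mem_sup_right
          (Submodule.subset_span ⟨a, b, l.sum, l.length, hsum_le, hterm, rfl⟩)
    · push_neg at hterm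
      obtain ⟨ha, hb, hMne⟩ := hterm
      obtain ⟨a', rfl⟩ : ∃ a', a = a' + 1 := ⟨a - 1, by omega⟩
      obtain ⟨b', rfl⟩ : ∃ b', b = b' + 1 := ⟨b - 1, by omega⟩
      have hex : ∃ k ∈ l, k ≠ n := by
        by_contra hc
        push_neg at hc
        have h := List.sum_eq_card_nsmul l n hc
        rw [smul_eq_mul, mul_comm] at h
        exact hMne h
      obtain ⟨k, hkl, hkn⟩ := hex
      have hkn' : k + 1 ≤ n := by have := hl k hkl; omega
      set t := l.erase k with ht
      have hlen1 : 1 ≤ l.length := List.length_pos_iff.mpr (List.ne_nil_of_mem hkl)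
      have htlen : t.length + 1 = l.length := by
        rw [ht, List.length_erase_of_mem hkl]
        omega
      have htmem : ∀ x ∈ t, x ≤ n := fun x hx => hl x (List.mem_of_mem_erase hx)
      have hperm : l.Perm (k :: t) := List.perm_cons_erase hkl
      have hrel := a_rel n k hkn'
      have hmul := Ideal.mul_mem_left _ (X 0 ^ a' * X 1 ^ b' * lProd n t) hrel
      have e1 : lMon n (a' + 1) (b' + 1) l -
          (lMon n (a' + 1) b' ((k + 1) :: t) + lMon n a' (b' + 1) ((k + 1) :: t)) ∈ Igen n := by
        convert hmul using 1
        rw [lMon, lMon, lMon, lProd_perm n hperm, lProd_cons, lProd_cons]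
        ring
      apply mem_MM_of_sub n e1
      have hcons : ∀ x ∈ (k + 1) :: t, x ≤ n := by
        intro x hx
        rcases List.mem_cons.mp hx with h | h
        · omega
        · exact htmem x h
      have m1 := ih (Dg - 1) (by omega) (a' + 1) b' ((k + 1) :: t)
        (by rw [List.length_cons]; omega) hcons
      have m2 := ih (Dg - 1) (by omega) a' (b' + 1) ((k + 1) :: t)
        (by rw [List.length_cons]; omega) hcons
      exact add_mem m1 m2

lemma phi_CanC (n : ℕ) (hn : 1 ≤ n) (M d : ℕ) (hMd : M ≤ n * d) :
    aeval (thetaOf n) (CanC n M d) = (uL * vL) ^ M * wL ^ d := by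
  have hq : M = n * (M / n) + M % n := (Nat.div_add_mod M n).symm
  have hr : M % n < n := Nat.mod_lt _ (by omega)
  set q := M / n with hqdef
  set r := M % n with hrdef
  rcases Nat.eq_zero_or_pos r with hr0 | hr0
  · have hqd : q ≤ d := Nat.le_of_mul_le_mul_left (by omega : n * q ≤ n * d) (by omega)
    obtain ⟨e, he⟩ : ∃ e, d = q + e := ⟨d - q, by omega⟩
    rw [show M = n * q by omega, he, CanC_eq_zero n hn q e]
    rw [map_mul, map_pow, map_pow, phi_Xc n n (le_refl n), phi_Xc n 0 (by omega)]
    rw [show ((uL * vL) ^ n * wL) ^ q = (uL * vL) ^ (n * q) * wL ^ q by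
      rw [mul_pow, ← pow_mul], show ((uL * vL) ^ 0 * wL) ^ e = wL ^ e by
      rw [pow_zero, one_mul], pow_add]
    ring
  · have hqd : q + 1 ≤ d := by
      have : q < d := Nat.lt_of_mul_lt_mul_left (by omega : n * q < n * d)
      omega
    obtain ⟨e, he⟩ : ∃ e, d = q + 1 + e := ⟨d - q - 1, by omega⟩
    rw [show M = n * q + r by omega, he, CanC_eq_pos n hn q r e hr0 hr]
    rw [map_mul, map_mul, map_pow, map_pow, phi_Xc n n (le_refl n), phi_Xc n r (by omega),
      phi_Xc n 0 (by omega)]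
    rw [show ((uL * vL) ^ n * wL) ^ q = (uL * vL) ^ (n * q) * wL ^ q by
      rw [mul_pow, ← pow_mul], show ((uL * vL) ^ 0 * wL) ^ e = wL ^ e by
      rw [pow_zero, one_mul], pow_add, pow_add]
    ring

lemma phi_CanMon (n : ℕ) (hn : 1 ≤ n) (a b M d : ℕ) (hMd : M ≤ n * d) :
    aeval (thetaOf n) (CanMon n a b M d) = phmon a b M d := by
  rw [CanMon, map_mul, map_mul, map_pow, map_pow, aeval_X, aeval_X, theta_zero, theta_one,
    phi_CanC n hn M d hMd, phmon]
  rw [mul_pow, mul_pow, mul_pow, pow_add, pow_add, pow_add (1 + uL)]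
  ring


noncomputable def lOf (γ : ℕ → ℕ) (m : ℕ) : List ℕ :=
  (List.range m).flatMap fun k => List.replicate (γ k) k

lemma lOf_mem (γ : ℕ → ℕ) (m x : ℕ) (hx : x ∈ lOf γ m) : x < m := by
  rw [lOf, List.mem_flatMap] at hx
  obtain ⟨k, hk, hxk⟩ := hx
  rw [List.eq_of_mem_replicate hxk]
  exact List.mem_range.mp hk

lemma lProd_lOf (n : ℕ) (γ : ℕ → ℕ) (m : ℕ) :
    lProd n (lOf γ m) = ∏ k ∈ Finset.range m, Xc n k ^ γ k := by
  induction m with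
  | zero => simp [lOf, lProd]
  | succ m ih =>
    rw [lOf, List.range_succ, List.flatMap_append, Finset.prod_range_succ, ← ih, lOf]
    rw [lProd, lProd, List.map_append, List.prod_append]
    congr 1
    simp [List.map_replicate, List.prod_replicate]

lemma monomial_mem (n : ℕ) (hn : 1 ≤ n) (v : Fin (n + 3) →₀ ℕ) :
    (monomial v (1 : ℂ) : MvPolynomial (Fin (n + 3)) ℂ) ∈ MM n := by
  set γv : ℕ → ℕ := fun k => if h : k + 2 < n + 3 then v ⟨k + 2, h⟩ else 0 with hγv
  have key : (monomial v (1 : ℂ) : MvPolynomial (Fin (n + 3)) ℂ)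
      = lMon n (v 0) (v 1) (lOf γv (n + 1)) := by
    have h1 : (monomial v (1 : ℂ) : MvPolynomial (Fin (n + 3)) ℂ)
        = ∏ i : Fin (n + 3), X i ^ v i := by
      rw [monomial_eq, C_1, one_mul, Finsupp.prod_pow]
    have h2 : ∏ i : Fin (n + 1), (X (i.succ.succ) : MvPolynomial (Fin (n + 3)) ℂ) ^ v i.succ.succ
        = ∏ k ∈ Finset.range (n + 1), Xc n k ^ γv k := by
      rw [← Fin.prod_univ_eq_prod_range (fun k => Xc n k ^ γv k) (n + 1)]
      refine Finset.prod_congr rfl fun i _ => ?_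
      have hiv : (i : ℕ) ≤ n := by omega
      have e1 : (i.succ.succ : Fin (n + 3)) = ⟨(i : ℕ) + 2, by omega⟩ := by
        ext; simp [Fin.val_succ]
      rw [e1, ← Xc_eq n i hiv (by omega), hγv]
      simp only [dif_pos (show (i : ℕ) + 2 < n + 3 by omega)]
    rw [h1, Fin.prod_univ_succ, Fin.prod_univ_succ, h2, lMon, lProd_lOf]
    rw [show ((0 : Fin (n + 2)).succ : Fin (n+3)) = 1 from rfl]
    ring
  rw [key]
  exact lMon_mem n hn ((v 0) + (v 1) + (lOf γv (n + 1)).length) (v 0) (v 1) _ rfl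
    (fun x hx => by have := lOf_mem γv (n + 1) x hx; omega)

lemma all_mem (n : ℕ) (hn : 1 ≤ n) (f : MvPolynomial (Fin (n + 3)) ℂ) : f ∈ MM n := by
  rw [f.as_sum]
  apply Submodule.sum_mem
  intro v hv
  have e : (monomial v (coeff v f) : MvPolynomial (Fin (n + 3)) ℂ)
      = (coeff v f) • monomial v (1 : ℂ) := by
    rw [smul_monomial, smul_eq_mul, mul_one]
  rw [e]
  exact Submodule.smul_mem _ _ (monomial_mem n hn v)

end Stmt7
theorem stmt7 (n : ℕ) (hn : 1 ≤ n) :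
    RingHom.ker (aeval (thetaOf n) : MvPolynomial (Fin (n + 3)) ℂ →ₐ[ℂ] LaurentRing) =
      Ideal.span {m | ∃ i j : Fin (n + 1),
        m = row1 n i * row2 n j - row1 n j * row2 n i} := by
  apply le_antisymm
  · intro f hf
    rw [RingHom.mem_ker] at hf
    have hfM := Stmt7.all_mem n hn f
    rw [Stmt7.MM, Submodule.mem_sup] at hfM
    obtain ⟨g, hg, h, hh, hsum⟩ := hfM
    have hgI : g ∈ Stmt7.Igen n := hg
    have hφg : aeval (thetaOf n) g = 0 := Stmt7.Igen_le_ker n hgI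
    have hφh : aeval (thetaOf n) h = 0 := by
      have h1 : aeval (thetaOf n) (g + h) = aeval (thetaOf n) f := by rw [hsum]
      rw [map_add, hφg, zero_add, hf] at h1
      exact h1
    rw [Submodule.mem_span_set] at hh
    obtain ⟨cc, hccsupp, hccsum⟩ := hh
    have hchoice : ∀ p : MvPolynomial (Fin (n + 3)) ℂ, ∃ a b M d : ℕ,
        p ∈ cc.support → (M ≤ n * d ∧ (a = 0 ∨ b = 0 ∨ M = n * d) ∧
          p = Stmt7.CanMon n a b M d) := by
      intro p
      by_cases hp : p ∈ cc.support
      · obtain ⟨a, b, M, d, h1, h2, h3⟩ := hccsupp hp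
        exact ⟨a, b, M, d, fun _ => ⟨h1, h2, h3⟩⟩
      · exact ⟨0, 0, 0, 0, fun hq => absurd hq hp⟩
    choose fA fB fM fD hF using hchoice
    have hzero : ∑ p ∈ cc.support, cc p • Stmt7.phmon (fA p) (fB p) (fM p) (fD p) = 0 := by
      have e0 : (cc.sum fun mi r => r • mi) = ∑ p ∈ cc.support, cc p • p := rfl
      have h2 : aeval (thetaOf n) h = ∑ p ∈ cc.support, cc p • aeval (thetaOf n) p := by
        rw [← hccsum, e0, map_sum]
        exact Finset.sum_congr rfl fun p _ => by rw [map_smul]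
      rw [hφh] at h2
      calc ∑ p ∈ cc.support, cc p • Stmt7.phmon (fA p) (fB p) (fM p) (fD p)
          = ∑ p ∈ cc.support, cc p • aeval (thetaOf n) p := by
            refine Finset.sum_congr rfl fun p hp => ?_
            congr 1
            exact ((congrArg (aeval (thetaOf n)) (hF p hp).2.2).trans
              (Stmt7.phi_CanMon n hn _ _ _ _ (hF p hp).1)).symm
        _ = 0 := h2.symm
    have hall := Stmt7.indep n cc.support fA fB fM fD
      (fun p hp q hq e1 e2 e3 e4 => by
        rw [(hF p hp).2.2, (hF q hq).2.2, e1, e2, e3, e4])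
      (fun p hp => (hF p hp).1)
      (fun p hp => (hF p hp).2.1)
      (fun p => cc p) hzero
    have hcc0 : cc = 0 := by
      ext p
      by_cases hp : p ∈ cc.support
      · exact hall p hp
      · exact Finsupp.notMem_support_iff.mp hp
    have hh0 : h = 0 := by
      rw [← hccsum, hcc0, Finsupp.sum_zero_index]
    rw [← hsum, hh0, add_zero]
    exact hgI
  · exact Stmt7.Igen_le_ker n
end

section
/- Fix an integer n ≥ 1. In the polynomial ring C[α_0, α_1, X_1, …, X_{n+3}], the element α_1^n · X_3 − α_0^n · X_{n+3} lies in the ideal generated by the 2×2 minors of the 2×(n+2) matrix whose columns are (α_0, α_1), (X_1 + X_2, X_1 X_2), and (X_{k+2}, X_{k+3}) for k = 1, …, n. -/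
open MvPolynomial

/-- First row `(α_0, X_1 + X_2, X_3, X_4, …, X_{n+2})` of the matrix defining the
small resolution `W`. The variables of `C[α_0, α_1, X_1, …, X_{n+3}]` are indexed
by `Fin (n+5)`: `α_0 = X 0`, `α_1 = X 1`, and `X_j = X (j+1)` for `j = 1, …, n+3`. -/
noncomputable def resRow1 (n : ℕ) : Fin (n + 2) → MvPolynomial (Fin (n + 5)) ℂ := fun k =>
  if (k : ℕ) = 0 then X 0
  else if (k : ℕ) = 1 then X 2 + X 3
  else X ⟨(k : ℕ) + 2, by omega⟩

/-- Second row `(α_1, X_1 X_2, X_4, X_5, …, X_{n+3})` of the matrix defining the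
small resolution `W`. -/
noncomputable def resRow2 (n : ℕ) : Fin (n + 2) → MvPolynomial (Fin (n + 5)) ℂ := fun k =>
  if (k : ℕ) = 0 then X 1
  else if (k : ℕ) = 1 then X 2 * X 3
  else X ⟨(k : ℕ) + 3, by omega⟩

theorem stmt10 (n : ℕ) (hn : 1 ≤ n) :
    (X 1 : MvPolynomial (Fin (n + 5)) ℂ) ^ n * X 4 -
        X 0 ^ n * X ⟨n + 4, by omega⟩ ∈
      Ideal.span {m | ∃ i j : Fin (n + 2),
        m = resRow1 n i * resRow2 n j - resRow1 n j * resRow2 n i} := by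
  set I := Ideal.span {m | ∃ i j : Fin (n + 2),
        m = resRow1 n i * resRow2 n j - resRow1 n j * resRow2 n i} with hI
  suffices h : ∀ m : ℕ, m ≤ n → ∀ (hm : m + 4 < n + 5),
      (X 1 : MvPolynomial (Fin (n + 5)) ℂ) ^ m * X 4 - X 0 ^ m * X ⟨m + 4, hm⟩ ∈ I by
    exact h n le_rfl (by omega)
  intro m
  induction m with
  | zero =>
    intro _ hm
    have h4 : (⟨0 + 4, hm⟩ : Fin (n + 5)) = 4 := by
      ext
      show 4 = 4 % (n + 5)
      exact (Nat.mod_eq_of_lt (by omega)).symm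
    rw [h4]
    simp
  | succ m ih =>
    intro hmn hm
    have hg : (X 0 * X ⟨m + 5, by omega⟩ - X ⟨m + 4, by omega⟩ * X 1 :
        MvPolynomial (Fin (n + 5)) ℂ) ∈ I := by
      apply Ideal.subset_span
      refine ⟨0, ⟨m + 2, by omega⟩, ?_⟩
      simp [resRow1, resRow2]
    have hprev := ih (by omega) (by omega)
    have key : (X 1 : MvPolynomial (Fin (n + 5)) ℂ) ^ (m + 1) * X 4 -
        X 0 ^ (m + 1) * X ⟨m + 1 + 4, hm⟩ =
        X 1 * ((X 1 : MvPolynomial (Fin (n + 5)) ℂ) ^ m * X 4 -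
          X 0 ^ m * X ⟨m + 4, by omega⟩) -
        X 0 ^ m * (X 0 * X ⟨m + 5, by omega⟩ - X ⟨m + 4, by omega⟩ * X 1) := by
      have : (⟨m + 1 + 4, hm⟩ : Fin (n + 5)) = ⟨m + 5, by omega⟩ := rfl
      rw [this]; ring
    rw [key]
    exact sub_mem (Ideal.mul_mem_left _ _ hprev) (Ideal.mul_mem_left _ _ hg)
end

section
/- Fix an integer n ≥ 1. The polynomial xz − y^2 − y t^n is prime in C[x,y,z,t], so R = C[x,y,z,t]/(xz − y(y+t^n)) is an integral domain; let K be its field of fractions. Then the three elements x, z/y, t of K are algebraically independent over C, and the C-subalgebra of K generated by x, y, z, t, and z/y is equal to the polynomial subalgebra C[x, z/y, t]; in particular y = x·(z/y) − t^n and z = (z/y)·(x·(z/y) − t^n) in K. -/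
open MvPolynomial

noncomputable section FlopAux

/-- `y`-image: `x*u - t^n` in variables `x = X 0, u = X 1, t = X 2`. -/
def yPoly (n : ℕ) : MvPolynomial (Fin 3) ℂ := X 0 * X 1 - X 2 ^ n

/-- map from `ℂ[x,z,t]` to `ℂ[x,u,t]` sending `x ↦ x`, `z ↦ u*(xu - tⁿ)`, `t ↦ t`. -/
def gMap (n : ℕ) : MvPolynomial (Fin 3) ℂ →+* MvPolynomial (Fin 3) ℂ :=
  (aeval ![X 0, X 1 * yPoly n, X 2] : MvPolynomial (Fin 3) ℂ →ₐ[ℂ] _).toRingHom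

lemma eval_aeval' (w : Fin 3 → ℂ) (gv : Fin 3 → MvPolynomial (Fin 3) ℂ)
    (p : MvPolynomial (Fin 3) ℂ) :
    eval w (aeval gv p) = eval (fun s => eval w (gv s)) p := by
  rw [MvPolynomial.aeval_def, eval_eval₂]
  have h1 : (eval w).comp (algebraMap ℂ (MvPolynomial (Fin 3) ℂ)) = RingHom.id ℂ := by
    ext c; simp [algebraMap_eq]
  rw [h1, eval₂_id]

lemma vanish (n : ℕ) (a b : MvPolynomial (Fin 3) ℂ)
    (h : gMap n a + gMap n b * yPoly n = 0) : a = 0 ∧ b = 0 := by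
  -- pointwise consequence
  have key : ∀ w : Fin 3 → ℂ,
      eval ![w 0, w 1 * (w 0 * w 1 - w 2 ^ n), w 2] a
        + eval ![w 0, w 1 * (w 0 * w 1 - w 2 ^ n), w 2] b * (w 0 * w 1 - w 2 ^ n) = 0 := by
    intro w
    have h0 := congrArg (eval w) h
    rw [map_add, map_mul, map_zero] at h0
    have hg : ∀ p : MvPolynomial (Fin 3) ℂ,
        eval w (gMap n p) = eval ![w 0, w 1 * (w 0 * w 1 - w 2 ^ n), w 2] p := by
      intro p
      show eval w (aeval ![X 0, X 1 * yPoly n, X 2] p) = _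
      rw [eval_aeval']
      have hfun : (fun s => eval w (![X 0, X 1 * yPoly n, X 2] s))
          = ![w 0, w 1 * (w 0 * w 1 - w 2 ^ n), w 2] := by
        funext s
        fin_cases s <;> simp [yPoly]
      rw [hfun]
    have hy : eval w (yPoly n) = w 0 * w 1 - w 2 ^ n := by simp [yPoly]
    rw [hg, hg, hy] at h0
    exact h0
  -- generic points
  have key2 : ∀ w : Fin 3 → ℂ, w 0 ≠ 0 → (w 2 ^ n) ^ 2 + 4 * (w 0 * w 1) ≠ 0 →
      eval w a = 0 ∧ eval w b = 0 := by
    intro w hx hd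
    obtain ⟨s, hs⟩ := IsAlgClosed.exists_pow_nat_eq ((w 2 ^ n) ^ 2 + 4 * (w 0 * w 1)) zero_lt_two
    have hsne : s ≠ 0 := by
      intro h0; rw [h0] at hs; exact hd (by rw [← hs]; ring)
    set t := w 2 ^ n with ht
    have hww : ![w 0, w 1, w 2] = w := by
      funext i; fin_cases i <;> rfl
    have main : ∀ y : ℂ, y ^ 2 + t * y - w 0 * w 1 = 0 →
        eval w a + eval w b * y = 0 := by
      intro y hy
      have hu := key ![w 0, (y + t) / w 0, w 2]
      simp only [Matrix.cons_val_zero, Matrix.cons_val_one, Matrix.head_cons,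
        Matrix.cons_val_two, Matrix.tail_cons] at hu
      have e1 : w 0 * ((y + t) / w 0) - w 2 ^ n = y := by
        field_simp
        rw [ht]; ring
      rw [e1] at hu
      have e2 : (y + t) / w 0 * y = w 1 := by
        field_simp
        linear_combination hy
      rw [e2, hww] at hu
      exact hu
    have hy1 : ((-t + s) / 2) ^ 2 + t * ((-t + s) / 2) - w 0 * w 1 = 0 := by
      linear_combination hs / 4
    have hy2 : ((-t - s) / 2) ^ 2 + t * ((-t - s) / 2) - w 0 * w 1 = 0 := by
      linear_combination hs / 4
    have m1 := main _ hy1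
    have m2 := main _ hy2
    have hb : eval w b = 0 := by
      have : eval w b * s = 0 := by linear_combination m1 - m2
      exact (mul_eq_zero.mp this).resolve_right hsne
    refine ⟨?_, hb⟩
    rw [hb] at m1
    simpa using m1
  -- now conclude `a = 0` and `b = 0`
  have conc : ∀ c : MvPolynomial (Fin 3) ℂ, (∀ w : Fin 3 → ℂ, w 0 ≠ 0 →
      (w 2 ^ n) ^ 2 + 4 * (w 0 * w 1) ≠ 0 → eval w c = 0) → c = 0 := by
    intro c hc
    have hG : c * (X 0 * ((X 2 ^ n) ^ 2 + C (4:ℂ) * (X 0 * X 1))) = 0 := by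
      apply MvPolynomial.funext
      intro w
      rw [map_zero, map_mul]
      by_cases h1 : w 0 = 0
      · simp [h1]
      by_cases h2 : (w 2 ^ n) ^ 2 + 4 * (w 0 * w 1) = 0
      · simp only [map_mul, map_add, map_pow, eval_X, eval_C]
        rw [h2]
        ring
      · rw [hc w h1 h2, zero_mul]
    have hGne : (X 0 * ((X 2 ^ n) ^ 2 + C (4:ℂ) * (X 0 * X 1)) :
        MvPolynomial (Fin 3) ℂ) ≠ 0 := by
      intro h0
      have := congrArg (eval (fun _ => (1:ℂ))) h0
      norm_num at this
    exact (mul_eq_zero.mp hG).resolve_right hGne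
  constructor
  · exact conc a fun w h1 h2 => (key2 w h1 h2).1
  · exact conc b fun w h1 h2 => (key2 w h1 h2).2




def FF (n : ℕ) : Polynomial (MvPolynomial (Fin 3) ℂ) :=
  Polynomial.X ^ 2 + (Polynomial.C (X 2 ^ n) * Polynomial.X - Polynomial.C (X 0 * X 1))

lemma FF_tail_deg (n : ℕ) :
    (Polynomial.C (X 2 ^ n : MvPolynomial (Fin 3) ℂ) * Polynomial.X
      - Polynomial.C (X 0 * X 1)).degree ≤ 1 := by
  rw [sub_eq_add_neg, ← Polynomial.C_neg]
  exact Polynomial.degree_linear_le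

lemma FF_monic (n : ℕ) : (FF n).Monic := by
  have := FF_tail_deg n
  exact Polynomial.monic_X_pow_add (lt_of_le_of_lt this (by norm_num))

lemma FF_degree (n : ℕ) : (FF n).degree = 2 := by
  rw [FF, Polynomial.degree_add_eq_left_of_degree_lt]
  · simp
  · rw [Polynomial.degree_X_pow]
    exact lt_of_le_of_lt (FF_tail_deg n) (by norm_num)


lemma eval2_FF (n : ℕ) : Polynomial.eval₂ (gMap n) (yPoly n) (FF n) = 0 := by
  rw [show Polynomial.eval₂ (gMap n) (yPoly n) (FF n)
      = Polynomial.eval₂RingHom (gMap n) (yPoly n) (FF n) from rfl]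
  simp only [FF, map_add, map_sub, map_mul, map_pow, Polynomial.eval₂_X,
    Polynomial.eval₂_C, Polynomial.coe_eval₂RingHom]
  have h1 : gMap n (X 2) = X 2 := by simp [gMap]
  have h2 : gMap n (X 0) = X 0 := by simp [gMap]
  have h3 : gMap n (X 1) = X 1 * yPoly n := by simp [gMap]
  rw [h1, h2, h3, yPoly]
  ring

lemma ker_phi (n : ℕ) :
    RingHom.ker (Polynomial.eval₂RingHom (gMap n) (yPoly n)) = Ideal.span {FF n} := by
  apply le_antisymm
  · intro p hp
    rw [RingHom.mem_ker] at hp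
    have hmono := FF_monic n
    have hdecomp := Polynomial.modByMonic_add_div p (FF n)
    set r := p %ₘ FF n with hr
    have hdeg : r.degree < (FF n).degree := Polynomial.degree_modByMonic_lt p hmono
    rw [FF_degree] at hdeg
    have hdeg1 : r.degree ≤ 1 := by
      rcases hD : r.degree with _ | m
      · exact bot_le
      · rw [hD] at hdeg
        have hm : (m : WithBot ℕ) < 2 := hdeg
        have hm' : m < 2 := by exact_mod_cast hm
        have : ((m : ℕ) : WithBot ℕ) ≤ 1 := by exact_mod_cast Nat.lt_succ_iff.mp hm'
        exact this
    have hform := Polynomial.eq_X_add_C_of_degree_le_one hdeg1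
    have hev : Polynomial.eval₂RingHom (gMap n) (yPoly n) r = 0 := by
      have := congrArg (Polynomial.eval₂RingHom (gMap n) (yPoly n)) hdecomp
      rw [map_add, map_mul] at this
      rw [show Polynomial.eval₂RingHom (gMap n) (yPoly n) (FF n)
        = Polynomial.eval₂ (gMap n) (yPoly n) (FF n) from rfl, eval2_FF, zero_mul,
        add_zero, hp] at this
      exact this
    rw [hform, map_add, map_mul] at hev
    simp only [Polynomial.coe_eval₂RingHom, Polynomial.eval₂_X, Polynomial.eval₂_C] at hev
    obtain ⟨ha, hb⟩ := vanish n (r.coeff 0) (r.coeff 1)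
      (by linear_combination hev)
    have hr0 : r = 0 := by rw [hform, ha, hb]; simp
    rw [← hdecomp, hr0, zero_add]
    exact Ideal.mem_span_singleton.2 ⟨p /ₘ FF n, rfl⟩
  · rw [Ideal.span_le, Set.singleton_subset_iff]
    show FF n ∈ RingHom.ker _
    rw [RingHom.mem_ker]
    exact eval2_FF n

/-- The embedding `ℂ[x,y,z,t] →ₐ ℂ[x,u,t]`, `x ↦ x`, `y ↦ xu−tⁿ`, `z ↦ u(xu−tⁿ)`, `t ↦ t`. -/
def Phi4 (n : ℕ) : MvPolynomial (Fin 4) ℂ →ₐ[ℂ] MvPolynomial (Fin 3) ℂ :=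
  aeval ![X 0, yPoly n, X 1 * yPoly n, X 2]

def eEquiv : MvPolynomial (Fin 4) ℂ ≃ₐ[ℂ] Polynomial (MvPolynomial (Fin 3) ℂ) :=
  (renameEquiv ℂ (Equiv.swap 0 1)).trans (finSuccEquiv ℂ 3)

lemma sw0 : Equiv.swap (0 : Fin 4) 1 0 = 1 := Equiv.swap_apply_left 0 1
lemma sw1 : Equiv.swap (0 : Fin 4) 1 1 = 0 := Equiv.swap_apply_right 0 1
lemma sw2 : Equiv.swap (0 : Fin 4) 1 2 = 2 :=
  Equiv.swap_apply_of_ne_of_ne (by decide) (by decide)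
lemma sw3 : Equiv.swap (0 : Fin 4) 1 3 = 3 :=
  Equiv.swap_apply_of_ne_of_ne (by decide) (by decide)

lemma fse0 : finSuccEquiv ℂ 3 (X (0 : Fin 4)) = Polynomial.X := finSuccEquiv_X_zero
lemma fse1 : finSuccEquiv ℂ 3 (X (1 : Fin 4)) = Polynomial.C (X 0) := by
  rw [show (1 : Fin 4) = Fin.succ 0 from rfl, finSuccEquiv_X_succ]
lemma fse2 : finSuccEquiv ℂ 3 (X (2 : Fin 4)) = Polynomial.C (X 1) := by
  rw [show (2 : Fin 4) = Fin.succ 1 from rfl, finSuccEquiv_X_succ]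
lemma fse3 : finSuccEquiv ℂ 3 (X (3 : Fin 4)) = Polynomial.C (X 2) := by
  rw [show (3 : Fin 4) = Fin.succ 2 from rfl, finSuccEquiv_X_succ]

lemma eEquiv_X0 : eEquiv (X (0 : Fin 4)) = Polynomial.C (X 0) := by
  simp only [eEquiv, AlgEquiv.trans_apply, renameEquiv_apply, rename_X, sw0, fse1]
lemma eEquiv_X1 : eEquiv (X (1 : Fin 4)) = Polynomial.X := by
  simp only [eEquiv, AlgEquiv.trans_apply, renameEquiv_apply, rename_X, sw1, fse0]
lemma eEquiv_X2 : eEquiv (X (2 : Fin 4)) = Polynomial.C (X 1) := by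
  simp only [eEquiv, AlgEquiv.trans_apply, renameEquiv_apply, rename_X, sw2, fse2]
lemma eEquiv_X3 : eEquiv (X (3 : Fin 4)) = Polynomial.C (X 2) := by
  simp only [eEquiv, AlgEquiv.trans_apply, renameEquiv_apply, rename_X, sw3, fse3]

lemma eEquiv_C (c : ℂ) : eEquiv (C c : MvPolynomial (Fin 4) ℂ) = Polynomial.C (C c) := by
  simp only [eEquiv, AlgEquiv.trans_apply, renameEquiv_apply, rename_C]
  simp [MvPolynomial.finSuccEquiv_apply]

lemma phi4_eq (n : ℕ) (p : MvPolynomial (Fin 4) ℂ) :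
    Phi4 n p = Polynomial.eval₂RingHom (gMap n) (yPoly n) (eEquiv p) := by
  have key : (Phi4 n).toRingHom
      = (Polynomial.eval₂RingHom (gMap n) (yPoly n)).comp
        ((eEquiv : MvPolynomial (Fin 4) ℂ ≃+* Polynomial (MvPolynomial (Fin 3) ℂ)) :
          MvPolynomial (Fin 4) ℂ →+* Polynomial (MvPolynomial (Fin 3) ℂ)) := by
    apply MvPolynomial.ringHom_ext
    · intro c
      show Phi4 n (C c) = Polynomial.eval₂RingHom (gMap n) (yPoly n) (eEquiv (C c))
      rw [eEquiv_C]
      simp [Phi4, gMap, algebraMap_eq]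
    · intro i
      show Phi4 n (X i) = Polynomial.eval₂RingHom (gMap n) (yPoly n) (eEquiv (X i))
      fin_cases i <;> simp only [Fin.isValue, Fin.mk_one, Fin.zero_eta, Fin.reduceFinMk]
      · rw [eEquiv_X0]; simp [Phi4, gMap]
      · rw [eEquiv_X1]; simp [Phi4, gMap]
      · rw [eEquiv_X2]; simp [Phi4, gMap]
      · rw [eEquiv_X3]; simp [Phi4, gMap]
  exact congrFun (congrArg (fun f => f.toFun) key) p

lemma eEquiv_f (n : ℕ) :
    eEquiv (X 0 * X 2 - X 1 ^ 2 - X 1 * X 3 ^ n : MvPolynomial (Fin 4) ℂ) = -(FF n) := by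
  rw [map_sub, map_sub, map_mul, map_pow, map_mul, map_pow,
    eEquiv_X0, eEquiv_X1, eEquiv_X2, eEquiv_X3, FF]
  rw [← Polynomial.C_mul, ← Polynomial.C_pow]
  ring
lemma ker_phi4 (n : ℕ) :
    RingHom.ker (Phi4 n).toRingHom
      = Ideal.span {(X 0 * X 2 - X 1 ^ 2 - X 1 * X 3 ^ n : MvPolynomial (Fin 4) ℂ)} := by
  ext p
  rw [RingHom.mem_ker]
  show Phi4 n p = 0 ↔ _
  rw [phi4_eq, Ideal.mem_span_singleton]
  constructor
  · intro h
    have : eEquiv p ∈ RingHom.ker (Polynomial.eval₂RingHom (gMap n) (yPoly n)) := h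
    rw [ker_phi n, Ideal.mem_span_singleton] at this
    have hdvd : eEquiv (X 0 * X 2 - X 1 ^ 2 - X 1 * X 3 ^ n : MvPolynomial (Fin 4) ℂ)
        ∣ eEquiv p := by
      rw [eEquiv_f]
      exact (neg_dvd).2 this
    obtain ⟨c, hc⟩ := hdvd
    refine ⟨eEquiv.symm c, ?_⟩
    apply eEquiv.injective
    rw [map_mul, AlgEquiv.apply_symm_apply, hc]
  · rintro ⟨c, rfl⟩
    rw [map_mul, eEquiv_f]
    simp only [map_mul, map_neg]
    have : Polynomial.eval₂RingHom (gMap n) (yPoly n) (FF n) = 0 := eval2_FF n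
    rw [this]
    ring

end FlopAux

set_option maxHeartbeats 1000000 in
set_option synthInstance.maxHeartbeats 400000 in
theorem stmt17 (n : ℕ) (hn : 1 ≤ n) :
    -- the defining polynomial is prime, so `R` is an integral domain …
    Prime (X 0 * X 2 - X 1 ^ 2 - X 1 * X 3 ^ n : MvPolynomial (Fin 4) ℂ) ∧
    IsDomain (flopBase n) ∧
    -- … and, letting `K` be its field of fractions:
    ∀ [IsDomain (flopBase n)],
      (let K := FractionRing (flopBase n)
       let xK := algebraMap (flopBase n) K (Ideal.Quotient.mk _ (X 0))
       let yK := algebraMap (flopBase n) K (Ideal.Quotient.mk _ (X 1))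
       let zK := algebraMap (flopBase n) K (Ideal.Quotient.mk _ (X 2))
       let tK := algebraMap (flopBase n) K (Ideal.Quotient.mk _ (X 3))
       -- `x, z/y, t` are algebraically independent over `ℂ`
       AlgebraicIndependent ℂ ![xK, zK / yK, tK] ∧
       -- `ℂ[x, y, z, t, z/y] = ℂ[x, z/y, t]` inside `K`
       Algebra.adjoin ℂ {xK, yK, zK, tK, zK / yK} =
         Algebra.adjoin ℂ {xK, zK / yK, tK} ∧
       -- `y = x·(z/y) − t^n` and `z = (z/y)·(x·(z/y) − t^n)` in `K`
       yK = xK * (zK / yK) - tK ^ n ∧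
       zK = (zK / yK) * (xK * (zK / yK) - tK ^ n)) := by
  set f : MvPolynomial (Fin 4) ℂ := X 0 * X 2 - X 1 ^ 2 - X 1 * X 3 ^ n with hf
  have hker := ker_phi4 n
  have hprimeI : (Ideal.span {f}).IsPrime := by
    rw [← hker]; exact RingHom.ker_isPrime _
  have hf0 : f ≠ 0 := by
    intro h0
    have := congrArg (eval (![1, 0, 1, 0] : Fin 4 → ℂ)) h0
    simp [hf] at this
  have hprime : Prime f := (Ideal.span_singleton_prime hf0).mp hprimeI
  have hdom : IsDomain (flopBase n) := by
    haveI := hprimeI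
    exact Ideal.Quotient.isDomain (Ideal.span {f})
  refine ⟨hprime, hdom, ?_⟩
  intro _inst
  intro K xK yK zK tK
  -- the induced embedding of `flopBase n` into `ℂ[x,u,t]`
  set M := MvPolynomial (Fin 3) ℂ with hM
  set I : Ideal (MvPolynomial (Fin 4) ℂ) := Ideal.span {f} with hI
  have hvanish : ∀ a ∈ I, Phi4 n a = 0 := by
    intro a ha
    rw [← hker] at ha
    exact ha
  set Φbar : flopBase n →ₐ[ℂ] M := Ideal.Quotient.liftₐ I (Phi4 n) hvanish with hΦbar
  have hΦbar_mk : ∀ p, Φbar (Ideal.Quotient.mk I p) = Phi4 n p := by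
    intro p
    rw [hΦbar, Ideal.Quotient.liftₐ_apply]
    exact Ideal.Quotient.lift_mk I _ _
  have hΦbar_inj : Function.Injective Φbar := by
    rw [injective_iff_map_eq_zero]
    intro a ha
    obtain ⟨p, rfl⟩ := Ideal.Quotient.mk_surjective a
    rw [hΦbar_mk] at ha
    rw [Ideal.Quotient.eq_zero_iff_mem]
    show p ∈ I
    rw [← hker]
    exact ha
  set L := FractionRing M with hL
  set γ : flopBase n →ₐ[ℂ] L := (IsScalarTower.toAlgHom ℂ M L).comp Φbar with hγ
  have hγinj : Function.Injective γ := by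
    intro a b hab
    apply hΦbar_inj
    exact IsFractionRing.injective M L hab
  set ι : K →ₐ[ℂ] L := IsFractionRing.liftAlgHom (K := K) hγinj with hι
  have hι_alg : ∀ r : flopBase n, ι (algebraMap (flopBase n) K r) = γ r := by
    intro r
    rw [hι, IsFractionRing.liftAlgHom_apply]
    exact IsFractionRing.lift_algebraMap _ _
  have hιinj : Function.Injective ι := ι.toRingHom.injective
  -- images of the four generators
  have himg : ∀ p : MvPolynomial (Fin 4) ℂ,
      ι (algebraMap (flopBase n) K (Ideal.Quotient.mk I p)) = algebraMap M L (Phi4 n p) := by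
    intro p
    rw [hι_alg]
    simp [hγ, hΦbar_mk]
  have hx : ι xK = algebraMap M L (X 0) := by
    rw [show xK = algebraMap (flopBase n) K (Ideal.Quotient.mk I (X 0)) from rfl, himg]
    congr 1
    simp [Phi4]
  have hyI : ι yK = algebraMap M L (yPoly n) := by
    rw [show yK = algebraMap (flopBase n) K (Ideal.Quotient.mk I (X 1)) from rfl, himg]
    congr 1
    simp [Phi4]
  have hzI : ι zK = algebraMap M L (X 1 * yPoly n) := by
    rw [show zK = algebraMap (flopBase n) K (Ideal.Quotient.mk I (X 2)) from rfl, himg]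
    congr 1
    simp [Phi4]
  have ht : ι tK = algebraMap M L (X 2) := by
    rw [show tK = algebraMap (flopBase n) K (Ideal.Quotient.mk I (X 3)) from rfl, himg]
    congr 1
    simp [Phi4]
  have hyPoly_ne : (yPoly n : M) ≠ 0 := by
    intro h0
    have := congrArg (eval (![1, 1, 0] : Fin 3 → ℂ)) h0
    simp [yPoly, zero_pow (by omega : n ≠ 0)] at this
  have hyL_ne : algebraMap M L (yPoly n) ≠ 0 := fun h0 =>
    hyPoly_ne (IsFractionRing.injective M L (by rw [h0, map_zero]))
  have hyK_ne : yK ≠ 0 := by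
    intro h0
    apply hyL_ne
    rw [← hyI, h0, map_zero]
  have hw : ι (zK / yK) = algebraMap M L (X 1) := by
    rw [map_div₀, hzI, hyI, map_mul, mul_div_assoc, div_self hyL_ne, mul_one]
  -- the defining relation in K
  have hrel : xK * zK - yK ^ 2 - yK * tK ^ n = 0 := by
    have h0 : (Ideal.Quotient.mk I) f = 0 :=
      Ideal.Quotient.eq_zero_iff_mem.2 (Ideal.subset_span rfl)
    have h1 : algebraMap (flopBase n) K ((Ideal.Quotient.mk I) f)
        = xK * zK - yK ^ 2 - yK * tK ^ n := by
      rw [hf]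
      simp only [map_sub, map_mul, map_pow]
      rfl
    rw [← h1, h0, map_zero]
  have hyid : yK = xK * (zK / yK) - tK ^ n := by
    rw [eq_sub_iff_add_eq, ← mul_div_assoc, eq_div_iff hyK_ne]
    linear_combination -hrel
  have hzid : zK = (zK / yK) * (xK * (zK / yK) - tK ^ n) := by
    rw [← hyid]
    exact (div_mul_cancel₀ zK hyK_ne).symm
  refine ⟨?_, ?_, hyid, hzid⟩
  · -- algebraic independence
    have hAI : AlgebraicIndependent ℂ (fun i : Fin 3 => algebraMap M L (X i)) := by
      rw [show (fun i : Fin 3 => algebraMap M L (X i))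
          = (IsScalarTower.toAlgHom ℂ M L) ∘ (X : Fin 3 → M) from rfl]
      exact (MvPolynomial.algebraicIndependent_X (Fin 3) ℂ).map'
        (IsFractionRing.injective M L)
    have hcomp : ι ∘ ![xK, zK / yK, tK] = fun i : Fin 3 => algebraMap M L (X i) := by
      funext i
      fin_cases i
      · exact hx
      · exact hw
      · exact ht
    exact AlgebraicIndependent.of_comp ι (hcomp ▸ hAI)
  · -- adjoin equality
    apply le_antisymm
    · rw [Algebra.adjoin_le_iff]
      intro v hv
      have mem_x : xK ∈ Algebra.adjoin ℂ {xK, zK / yK, tK} :=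
        Algebra.subset_adjoin (by simp)
      have mem_w : zK / yK ∈ Algebra.adjoin ℂ {xK, zK / yK, tK} :=
        Algebra.subset_adjoin (by simp)
      have mem_t : tK ∈ Algebra.adjoin ℂ {xK, zK / yK, tK} :=
        Algebra.subset_adjoin (by simp)
      have mem_y : yK ∈ Algebra.adjoin ℂ {xK, zK / yK, tK} := by
        have h := Subalgebra.sub_mem _ (Subalgebra.mul_mem _ mem_x mem_w)
          (Subalgebra.pow_mem _ mem_t n)
        rwa [← hyid] at h
      have mem_z : zK ∈ Algebra.adjoin ℂ {xK, zK / yK, tK} := by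
        have h := Subalgebra.mul_mem _ mem_w
          (Subalgebra.sub_mem _ (Subalgebra.mul_mem _ mem_x mem_w)
            (Subalgebra.pow_mem _ mem_t n))
        rwa [← hzid] at h
      rcases hv with rfl | rfl | rfl | rfl | rfl
      · exact mem_x
      · exact mem_y
      · exact mem_z
      · exact mem_t
      · exact mem_w
    · apply Algebra.adjoin_mono
      intro v hv
      rcases hv with rfl | rfl | rfl
      · simp
      · simp
      · simp
end
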